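/- arXiv:1301.4518 — 5 statements merged into one kernel-verified Lean document; each statement's English description precedes it below -/
import Mathlib

section
/- The number of elements of the right planar rook monoid RP_n equals the Catalan number C_{n+1} = binomial(2n+2, n+1)/(n+2). -/
/-- A partial map on `Fin n`, representing a rook-type diagram: the function
goes from the top row of vertices to the bottom row. -/
abbrev PMap (n : ℕ) := Fin n → Option (Fin n)

/-- Diagram multiplication `f ⬝ g`: stack `f` on top of `g`, i.e. apply `f` first. -/
def pcomp {n : ℕ} (f g : PMap n) : PMap n := fun i => (f i).bind g

/-- The identity diagram. -/
def pid (n : ℕ) : PMap n := fun i => some i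

infixl:70 " ⬝ " => pcomp

/-- The generator `r i` (0-indexed): sends vertex `i+1` on top to vertex `i`
on the bottom, is undefined at `i`, and fixes all other vertices. -/
def rmap (n i : ℕ) : PMap n := fun j =>
  if (j : ℕ) = i then none
  else if (j : ℕ) = i + 1 then (if h : i < n then some ⟨i, h⟩ else none)
  else some j

/-- The generator `l i` (0-indexed): sends vertex `i` on top to vertex `i+1`
on the bottom, is undefined at `i+1`, and fixes all other vertices. -/
def lmap (n i : ℕ) : PMap n := fun j =>
  if (j : ℕ) = i + 1 then none
  else if (j : ℕ) = i then (if h : i + 1 < n then some ⟨i + 1, h⟩ else none)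
  else some j

/-- The idempotent `p i` (0-indexed): the partial identity undefined at vertex `i`. -/
def pmapd (n i : ℕ) : PMap n := fun j =>
  if (j : ℕ) = i then none else some j

/-- `f` is a partial injection. -/
def IsInj {n : ℕ} (f : PMap n) : Prop :=
  ∀ i j a, f i = some a → f j = some a → i = j

/-- `f` is order-preserving on its domain. -/
def IsOrd {n : ℕ} (f : PMap n) : Prop :=
  ∀ i j a b, f i = some a → f j = some b → i < j → a < b

/-- Right-planar condition: each bottom endpoint is weakly to the left of its top endpoint. -/
def IsRtop {n : ℕ} (f : PMap n) : Prop := ∀ i a, f i = some a → a ≤ i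

/-- Left-planar condition: each bottom endpoint is weakly to the right of its top endpoint. -/
def IsLtop {n : ℕ} (f : PMap n) : Prop := ∀ i a, f i = some a → i ≤ a


open Finset List DyckStep

namespace RPaux

variable {n : ℕ}

/-- prefix count: number of elements of `S` with value `< i`. -/
def pcnt (S : Finset (Fin n)) (i : ℕ) : ℕ := (S.filter (fun x => x.val < i)).card

lemma pcnt_zero (S : Finset (Fin n)) : pcnt S 0 = 0 := by simp [pcnt]

lemma pcnt_succ (S : Finset (Fin n)) (i : ℕ) :
    pcnt S (i + 1) = pcnt S i + (if h : i < n then (if ⟨i, h⟩ ∈ S then 1 else 0) else 0) := by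
  classical
  unfold pcnt
  have hsplit : S.filter (fun x => x.val < i + 1)
      = S.filter (fun x => x.val < i) ∪ S.filter (fun x => x.val = i) := by
    rw [← Finset.filter_or]
    apply Finset.filter_congr
    intro x _
    constructor <;> intro h <;> omega
  rw [hsplit, Finset.card_union_of_disjoint]
  · congr 1
    by_cases h : i < n
    · simp only [dif_pos h]
      by_cases hm : (⟨i, h⟩ : Fin n) ∈ S
      · rw [if_pos hm]
        have : S.filter (fun x => x.val = i) = {⟨i, h⟩} := by
          ext x
          simp only [Finset.mem_filter, Finset.mem_singleton]
          constructor
          · rintro ⟨_, hx⟩; exact Fin.ext hx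
          · rintro rfl; exact ⟨hm, rfl⟩
        rw [this, Finset.card_singleton]
      · rw [if_neg hm]
        have : S.filter (fun x => x.val = i) = ∅ := by
          ext x
          simp only [Finset.mem_filter, Finset.notMem_empty, iff_false, not_and]
          intro hx hxi
          apply hm
          have : x = ⟨i, h⟩ := Fin.ext hxi
          rwa [this] at hx
        rw [this]; rfl
    · simp only [dif_neg h]
      have : S.filter (fun x => x.val = i) = ∅ := by
        ext x
        simp only [Finset.mem_filter, Finset.notMem_empty, iff_false, not_and]
        intro _ hxi
        exact absurd (hxi ▸ x.isLt) h
      rw [this]; rfl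
  · rw [Finset.disjoint_left]
    intro x hx hx'
    simp only [Finset.mem_filter] at hx hx'
    omega

lemma pcnt_le (S : Finset (Fin n)) (i : ℕ) : pcnt S i ≤ i := by
  classical
  have : pcnt S i ≤ (Finset.range i).card := by
    unfold pcnt
    apply Finset.card_le_card_of_injOn Fin.val
      (fun x hx => by simp only [Finset.mem_coe, Finset.mem_filter] at hx; simpa using hx.2)
      (fun a _ b _ hab => Fin.ext hab)
  simpa using this

lemma pcnt_of_ge (S : Finset (Fin n)) {i : ℕ} (h : n ≤ i) : pcnt S i = S.card := by
  unfold pcnt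
  rw [Finset.filter_true_of_mem]
  intro x _
  exact lt_of_lt_of_le x.isLt h

end RPaux
section T2
open Finset List DyckStep
namespace RPaux
variable {n : ℕ}

/-- The step at position `m` of the Dyck word associated to domain `A` and range `B`. -/
def wfn (A B : Finset (Fin n)) (m : ℕ) : DyckStep :=
  if m = 0 then U
  else if m % 2 = 1 then
    (if h : (m - 1) / 2 < n then (if (⟨(m - 1) / 2, h⟩ : Fin n) ∈ B then U else D) else D)
  else (if h : m / 2 - 1 < n then (if (⟨m / 2 - 1, h⟩ : Fin n) ∈ A then D else U) else U)

/-- The Dyck word list associated to a pair of finsets. -/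
def wlist (A B : Finset (Fin n)) : List DyckStep :=
  List.ofFn (fun m : Fin (2 * n + 2) => wfn A B m)

lemma length_wlist (A B : Finset (Fin n)) : (wlist A B).length = 2 * n + 2 := by
  simp [wlist]

lemma wfn_zero (A B : Finset (Fin n)) : wfn A B 0 = U := by simp [wfn]

lemma wfn_odd (A B : Finset (Fin n)) (i : ℕ) (h : i < n) :
    wfn A B (2 * i + 1) = if (⟨i, h⟩ : Fin n) ∈ B then U else D := by
  have h0 : 2 * i + 1 ≠ 0 := by omega
  have h1 : (2 * i + 1) % 2 = 1 := by omega
  have h2 : (2 * i + 1 - 1) / 2 = i := by omega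
  simp [wfn, h0, h1, h2, h]

lemma wfn_last (A B : Finset (Fin n)) : wfn A B (2 * n + 1) = D := by
  have h0 : 2 * n + 1 ≠ 0 := by omega
  have h1 : (2 * n + 1) % 2 = 1 := by omega
  have h2 : (2 * n + 1 - 1) / 2 = n := by omega
  simp [wfn, h0, h1, h2]

lemma wfn_even (A B : Finset (Fin n)) (i : ℕ) (h : i < n) :
    wfn A B (2 * i + 2) = if (⟨i, h⟩ : Fin n) ∈ A then D else U := by
  have h0 : 2 * i + 2 ≠ 0 := by omega
  have h1 : ¬ ((2 * i + 2) % 2 = 1) := by omega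
  have h2 : (2 * i + 2) / 2 - 1 = i := by omega
  simp [wfn, h0, h1, h2, h]

lemma take_succ_wlist (A B : Finset (Fin n)) (m : ℕ) (hm : m < 2 * n + 2) :
    (wlist A B).take (m + 1) = (wlist A B).take m ++ [wfn A B m] := by
  rw [List.take_succ]
  congr 1
  have hm' : m < (wlist A B).length := by rw [length_wlist]; exact hm
  rw [List.getElem?_eq_getElem hm']
  simp only [wlist, List.getElem_ofFn, Option.toList_some]

lemma count_take_odd (A B : Finset (Fin n)) (i : ℕ) (hi : i ≤ n) :
    ((wlist A B).take (2 * i + 1)).count U = 1 + pcnt B i + (i - pcnt A i) ∧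
    ((wlist A B).take (2 * i + 1)).count D = pcnt A i + (i - pcnt B i) := by
  induction i with
  | zero =>
    have e : (wlist A B).take 1 = (wlist A B).take 0 ++ [wfn A B 0] :=
      take_succ_wlist A B 0 (by omega)
    simp [e, wfn_zero, pcnt_zero]
  | succ i ih =>
    have hlt : i < n := by omega
    obtain ⟨c1, c2⟩ := ih (by omega)
    have e1 : (wlist A B).take (2 * i + 2) = (wlist A B).take (2 * i + 1) ++ [wfn A B (2 * i + 1)] :=
      take_succ_wlist A B (2 * i + 1) (by omega)
    have e2 : (wlist A B).take (2 * i + 3) = (wlist A B).take (2 * i + 2) ++ [wfn A B (2 * i + 2)] :=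
      take_succ_wlist A B (2 * i + 2) (by omega)
    have hA := pcnt_le A i
    have hB := pcnt_le B i
    have e3 : 2 * (i + 1) + 1 = 2 * i + 3 := by omega
    rw [e3, e2, e1, wfn_odd A B i hlt, wfn_even A B i hlt,
      pcnt_succ A i, pcnt_succ B i, dif_pos hlt, dif_pos hlt]
    by_cases hBm : (⟨i, hlt⟩ : Fin n) ∈ B <;> by_cases hAm : (⟨i, hlt⟩ : Fin n) ∈ A <;>
      simp [List.count_append, c1, c2, hBm, hAm] <;> omega

lemma wlist_eq_take (A B : Finset (Fin n)) :
    wlist A B = (wlist A B).take (2 * n + 1) ++ [wfn A B (2 * n + 1)] := by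
  have := take_succ_wlist A B (2 * n + 1) (by omega)
  rw [← this, List.take_of_length_le (by rw [length_wlist])]

lemma count_full (A B : Finset (Fin n)) :
    (wlist A B).count U = 1 + pcnt B n + (n - pcnt A n) ∧
    (wlist A B).count D = 1 + pcnt A n + (n - pcnt B n) := by
  obtain ⟨c1, c2⟩ := count_take_odd A B n le_rfl
  rw [wlist_eq_take A B, wfn_last]
  simp [List.count_append, c1, c2]
  omega

end RPaux
end T2
section T3
open Finset List DyckStep
namespace RPaux
variable {n : ℕ}

lemma count_take_le (A B : Finset (Fin n)) (hcard : A.card = B.card)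
    (hpre : ∀ i, pcnt A i ≤ pcnt B i) (m : ℕ) :
    ((wlist A B).take m).count D ≤ ((wlist A B).take m).count U := by
  by_cases hm : 2 * n + 2 ≤ m
  · rw [List.take_of_length_le (by rw [length_wlist]; exact hm)]
    obtain ⟨c1, c2⟩ := count_full A B
    have hA := pcnt_of_ge A (le_refl n)
    have hB := pcnt_of_ge B (le_refl n)
    have hA' := pcnt_le A n
    have hB' := pcnt_le B n
    omega
  · push_neg at hm
    by_cases h0 : m = 0
    · subst h0; simp
    by_cases hodd : m % 2 = 1
    · have hi : m = 2 * ((m - 1) / 2) + 1 := by omega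
      set i := (m - 1) / 2 with hidef
      have hin : i ≤ n := by omega
      obtain ⟨c1, c2⟩ := count_take_odd A B i hin
      have h1 := pcnt_le A i
      have h2 := pcnt_le B i
      have h3 := hpre i
      rw [hi]
      omega
    · have hi : m = 2 * (m / 2 - 1) + 2 := by omega
      set i := m / 2 - 1 with hidef
      have hin : i < n := by omega
      obtain ⟨c1, c2⟩ := count_take_odd A B i (le_of_lt hin)
      have e1 : (wlist A B).take (2 * i + 2)
          = (wlist A B).take (2 * i + 1) ++ [wfn A B (2 * i + 1)] :=
        take_succ_wlist A B (2 * i + 1) (by omega)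
      have h1 := pcnt_le A i
      have h2 := pcnt_le B i
      have h3 := hpre i
      rw [hi, e1, wfn_odd A B i hin]
      by_cases hBm : (⟨i, hin⟩ : Fin n) ∈ B <;> simp [List.count_append, c1, c2, hBm] <;> omega

/-- The Dyck word associated to a good pair of finsets. -/
def wordOf (A B : Finset (Fin n)) (hcard : A.card = B.card)
    (hpre : ∀ i, pcnt A i ≤ pcnt B i) : DyckWord where
  toList := wlist A B
  count_U_eq_count_D := by
    obtain ⟨c1, c2⟩ := count_full A B
    have hA := pcnt_of_ge A (le_refl n)
    have hB := pcnt_of_ge B (le_refl n)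
    have hA' := pcnt_le A n
    have hB' := pcnt_le B n
    omega
  count_D_le_count_U := count_take_le A B hcard hpre

lemma semilength_wordOf (A B : Finset (Fin n)) (hcard : A.card = B.card)
    (hpre : ∀ i, pcnt A i ≤ pcnt B i) : (wordOf A B hcard hpre).semilength = n + 1 := by
  have c1 := (count_full A B).1
  have hA := pcnt_of_ge A (le_refl n)
  have hB := pcnt_of_ge B (le_refl n)
  have hA' := pcnt_le A n
  have hB' := pcnt_le B n
  show (wlist A B).count U = n + 1
  omega

/-- Recover the domain finset from a Dyck word. -/
def Aof (n : ℕ) (p : DyckWord) : Finset (Fin n) :=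
  univ.filter (fun i => p.toList.getD (2 * i.val + 2) U = D)

/-- Recover the range finset from a Dyck word. -/
def Bof (n : ℕ) (p : DyckWord) : Finset (Fin n) :=
  univ.filter (fun i => p.toList.getD (2 * i.val + 1) D = U)

lemma wlist_AofBof (p : DyckWord) (hp : p.semilength = n + 1) :
    wlist (Aof n p) (Bof n p) = p.toList := by
  have hlen : p.toList.length = 2 * n + 2 := by
    rw [← p.two_mul_semilength_eq_length, hp]; ring
  have hne : p.toList ≠ [] := by
    intro h; rw [h] at hlen; simp at hlen
  apply List.ext_getElem (by rw [length_wlist, hlen])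
  intro m h1 h2
  have hm : m < 2 * n + 2 := by rwa [length_wlist] at h1
  have hw : (wlist (Aof n p) (Bof n p))[m] = wfn (Aof n p) (Bof n p) m := by
    simp only [wlist, List.getElem_ofFn]
  rw [hw]
  by_cases h0 : m = 0
  · subst h0
    rw [wfn_zero, List.getElem_zero, p.head_eq_U]
  by_cases hlast : m = 2 * n + 1
  · subst hlast
    have hthis := p.getLast_eq_D hne
    rw [List.getLast_eq_getElem] at hthis
    have e : p.toList[p.toList.length - 1]'(by omega) = p.toList[2 * n + 1]'h2 :=
      getElem_congr rfl (by omega) (by omega)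
    rw [e] at hthis
    rw [wfn_last, hthis]
  by_cases hodd : m % 2 = 1
  · have hi : m = 2 * ((m - 1) / 2) + 1 := by omega
    set i := (m - 1) / 2 with hidef
    have hin : i < n := by omega
    have hmem : (⟨i, hin⟩ : Fin n) ∈ Bof n p ↔ p.toList.getD m D = U := by
      rw [hi]; simp [Bof]
    have hgetD : p.toList.getD m D = p.toList[m]'h2 :=
      List.getD_eq_getElem _ _ h2
    have hwfn : wfn (Aof n p) (Bof n p) m
        = if (⟨i, hin⟩ : Fin n) ∈ Bof n p then U else D := by
      rw [hi]; exact wfn_odd _ _ i hin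
    rw [hwfn]
    rcases (p.toList[m]'h2).dichotomy with hU | hD
    · rw [if_pos (hmem.mpr (by rw [hgetD, hU])), hU]
    · rw [if_neg (fun hc => by
        have hx := hmem.mp hc; rw [hgetD, hD] at hx; exact DyckStep.noConfusion hx), hD]
  · have hi : m = 2 * (m / 2 - 1) + 2 := by omega
    set i := m / 2 - 1 with hidef
    have hin : i < n := by omega
    have hmem : (⟨i, hin⟩ : Fin n) ∈ Aof n p ↔ p.toList.getD m U = D := by
      rw [hi]; simp [Aof]
    have hgetD : p.toList.getD m U = p.toList[m]'h2 :=
      List.getD_eq_getElem _ _ h2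
    have hwfn : wfn (Aof n p) (Bof n p) m
        = if (⟨i, hin⟩ : Fin n) ∈ Aof n p then D else U := by
      rw [hi]; exact wfn_even _ _ i hin
    rw [hwfn]
    rcases (p.toList[m]'h2).dichotomy with hU | hD
    · rw [if_neg (fun hc => by
        have hx := hmem.mp hc; rw [hgetD, hU] at hx; exact DyckStep.noConfusion hx), hU]
    · rw [if_pos (hmem.mpr (by rw [hgetD, hD])), hD]

lemma good_AofBof (p : DyckWord) (hp : p.semilength = n + 1) :
    (Aof n p).card = (Bof n p).card ∧ ∀ i, pcnt (Aof n p) i ≤ pcnt (Bof n p) i := by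
  have hw := wlist_AofBof p hp
  obtain ⟨c1, c2⟩ := count_full (Aof n p) (Bof n p)
  have hA := pcnt_of_ge (Aof n p) (le_refl n)
  have hB := pcnt_of_ge (Bof n p) (le_refl n)
  have hA' := pcnt_le (Aof n p) n
  have hB' := pcnt_le (Bof n p) n
  have htot := p.count_U_eq_count_D
  rw [← hw] at htot
  have hc : (Aof n p).card = (Bof n p).card := by omega
  refine ⟨hc, fun i => ?_⟩
  by_cases hi : n ≤ i
  · rw [pcnt_of_ge _ hi, pcnt_of_ge _ hi, hc]
  · push_neg at hi
    have hd := p.count_D_le_count_U (2 * i + 1)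
    rw [← hw] at hd
    obtain ⟨d1, d2⟩ := count_take_odd (Aof n p) (Bof n p) i (le_of_lt hi)
    have h1 := pcnt_le (Aof n p) i
    have h2 := pcnt_le (Bof n p) i
    omega

lemma Aof_wordOf (A B : Finset (Fin n)) (hcard : A.card = B.card)
    (hpre : ∀ i, pcnt A i ≤ pcnt B i) : Aof n (wordOf A B hcard hpre) = A := by
  ext i
  have hin : (i : ℕ) < n := i.isLt
  have hgetD : (wlist A B).getD (2 * i.val + 2) U = wfn A B (2 * i.val + 2) := by
    rw [List.getD_eq_getElem _ _ (by rw [length_wlist]; omega)]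
    simp only [wlist, List.getElem_ofFn]
  simp only [Aof, Finset.mem_filter, Finset.mem_univ, true_and]
  show (wordOf A B hcard hpre).toList.getD (2 * i.val + 2) U = D ↔ i ∈ A
  have : (wordOf A B hcard hpre).toList = wlist A B := rfl
  rw [this, hgetD, wfn_even A B i.val hin]
  have : (⟨i.val, hin⟩ : Fin n) = i := by exact Fin.ext rfl
  rw [this]
  by_cases hm : i ∈ A <;> simp [hm]

lemma Bof_wordOf (A B : Finset (Fin n)) (hcard : A.card = B.card)
    (hpre : ∀ i, pcnt A i ≤ pcnt B i) : Bof n (wordOf A B hcard hpre) = B := by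
  ext i
  have hin : (i : ℕ) < n := i.isLt
  have hgetD : (wlist A B).getD (2 * i.val + 1) D = wfn A B (2 * i.val + 1) := by
    rw [List.getD_eq_getElem _ _ (by rw [length_wlist]; omega)]
    simp only [wlist, List.getElem_ofFn]
  simp only [Bof, Finset.mem_filter, Finset.mem_univ, true_and]
  show (wordOf A B hcard hpre).toList.getD (2 * i.val + 1) D = U ↔ i ∈ B
  have : (wordOf A B hcard hpre).toList = wlist A B := rfl
  rw [this, hgetD, wfn_odd A B i.val hin]
  have : (⟨i.val, hin⟩ : Fin n) = i := by exact Fin.ext rfl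
  rw [this]
  by_cases hm : i ∈ B <;> simp [hm]

/-- The equivalence between good pairs of finsets and Dyck words of semilength `n+1`. -/
def equivGBDyck (n : ℕ) :
    {q : Finset (Fin n) × Finset (Fin n) //
        q.1.card = q.2.card ∧ ∀ i, pcnt q.1 i ≤ pcnt q.2 i}
      ≃ {p : DyckWord // p.semilength = n + 1} where
  toFun q := ⟨wordOf q.1.1 q.1.2 q.2.1 q.2.2, semilength_wordOf _ _ _ _⟩
  invFun p := ⟨(Aof n p.1, Bof n p.1), good_AofBof p.1 p.2⟩
  left_inv q := by
    apply Subtype.ext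
    exact Prod.ext (Aof_wordOf q.1.1 q.1.2 q.2.1 q.2.2) (Bof_wordOf q.1.1 q.1.2 q.2.1 q.2.2)
  right_inv p := Subtype.ext (DyckWord.ext (wlist_AofBof p.1 p.2))

end RPaux
end T3
section T4
open Finset
namespace RPaux
variable {n : ℕ}

/-- The domain of a partial map, as a finset. -/
def domF (f : PMap n) : Finset (Fin n) := univ.filter (fun i => (f i).isSome)

/-- The range of a partial map, as a finset. -/
def ranF (f : PMap n) : Finset (Fin n) := univ.filter (fun a => ∃ i, f i = some a)

/-- The canonical order-preserving partial injection with domain `A` and range `B`. -/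
def canon (A B : Finset (Fin n)) (h : B.card = A.card) : PMap n :=
  fun i => if hi : i ∈ A then
    some (B.orderEmbOfFin h ((A.orderIsoOfFin rfl).symm ⟨i, hi⟩)) else none

lemma canon_emb (A B : Finset (Fin n)) (h : B.card = A.card) (j : Fin A.card) :
    canon A B h (A.orderEmbOfFin rfl j) = some (B.orderEmbOfFin h j) := by
  have hmem : A.orderEmbOfFin rfl j ∈ A := Finset.orderEmbOfFin_mem A rfl j
  unfold canon
  rw [dif_pos hmem]
  congr 2
  have e : (⟨A.orderEmbOfFin rfl j, hmem⟩ : {x // x ∈ A}) = A.orderIsoOfFin rfl j :=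
    Subtype.ext (Finset.coe_orderIsoOfFin_apply A rfl j).symm
  rw [e, OrderIso.symm_apply_apply]

lemma canon_eq_some {A B : Finset (Fin n)} {h : B.card = A.card} {i a : Fin n}
    (hca : canon A B h i = some a) :
    ∃ j : Fin A.card, A.orderEmbOfFin rfl j = i ∧ B.orderEmbOfFin h j = a := by
  unfold canon at hca
  by_cases hi : i ∈ A
  · rw [dif_pos hi] at hca
    refine ⟨(A.orderIsoOfFin rfl).symm ⟨i, hi⟩, ?_, Option.some.inj hca⟩
    rw [← Finset.coe_orderIsoOfFin_apply, OrderIso.apply_symm_apply]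
  · rw [dif_neg hi] at hca
    exact absurd hca (by simp)

lemma isInj_canon (A B : Finset (Fin n)) (h : B.card = A.card) : IsInj (canon A B h) := by
  intro i j a hi hj
  obtain ⟨ji, hji, hai⟩ := canon_eq_some hi
  obtain ⟨jj, hjj, haj⟩ := canon_eq_some hj
  have e : ji = jj := (B.orderEmbOfFin h).injective (by rw [hai, haj])
  rw [← hji, ← hjj, e]

lemma isOrd_canon (A B : Finset (Fin n)) (h : B.card = A.card) : IsOrd (canon A B h) := by
  intro i j a b hi hj hij
  obtain ⟨ji, hji, hai⟩ := canon_eq_some hi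
  obtain ⟨jj, hjj, haj⟩ := canon_eq_some hj
  have e : ji < jj := by
    rw [← (A.orderEmbOfFin rfl).strictMono.lt_iff_lt, hji, hjj]; exact hij
  rw [← hai, ← haj]
  exact (B.orderEmbOfFin h).strictMono e

lemma domF_canon (A B : Finset (Fin n)) (h : B.card = A.card) : domF (canon A B h) = A := by
  ext i
  simp only [domF, Finset.mem_filter, Finset.mem_univ, true_and]
  by_cases hi : i ∈ A <;> simp [canon, hi]

lemma ranF_canon (A B : Finset (Fin n)) (h : B.card = A.card) : ranF (canon A B h) = B := by
  ext a
  simp only [ranF, Finset.mem_filter, Finset.mem_univ, true_and]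
  constructor
  · rintro ⟨i, hfi⟩
    obtain ⟨j, -, haj⟩ := canon_eq_some hfi
    rw [← haj]
    exact Finset.orderEmbOfFin_mem B h j
  · intro ha
    have : a ∈ Set.range ⇑(B.orderEmbOfFin h) := by
      rw [Finset.range_orderEmbOfFin]; exact_mod_cast ha
    obtain ⟨j, hj⟩ := this
    exact ⟨A.orderEmbOfFin rfl j, by rw [canon_emb, hj]⟩

lemma rtop_iff (A B : Finset (Fin n)) (h : B.card = A.card) :
    IsRtop (canon A B h) ↔ ∀ j : Fin A.card, B.orderEmbOfFin h j ≤ A.orderEmbOfFin rfl j := by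
  constructor
  · intro hr j
    exact hr _ _ (canon_emb A B h j)
  · intro hpt i a hca
    obtain ⟨j, hji, haj⟩ := canon_eq_some hca
    rw [← hji, ← haj]
    exact hpt j

lemma pcnt_eq_card (S : Finset (Fin n)) {k : ℕ} (hS : S.card = k) (i : ℕ) :
    pcnt S i = (univ.filter (fun j : Fin k => ((S.orderEmbOfFin hS j : Fin n) : ℕ) < i)).card := by
  unfold pcnt
  rw [eq_comm]
  apply Finset.card_bij (fun j _ => S.orderEmbOfFin hS j)
  · intro j hj
    simp only [Finset.mem_filter, Finset.mem_univ, true_and] at hj ⊢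
    exact ⟨Finset.orderEmbOfFin_mem S hS j, hj⟩
  · intro j1 _ j2 _ he
    exact (S.orderEmbOfFin hS).injective he
  · intro x hx
    simp only [Finset.mem_filter, Finset.mem_univ, true_and] at hx
    have : x ∈ Set.range ⇑(S.orderEmbOfFin hS) := by
      rw [Finset.range_orderEmbOfFin]; exact_mod_cast hx.1
    obtain ⟨j, hj⟩ := this
    refine ⟨j, by simp only [Finset.mem_filter, Finset.mem_univ, true_and]; rw [hj]; exact hx.2, hj⟩

lemma ptwise_iff (A B : Finset (Fin n)) (h : B.card = A.card) :
    (∀ j : Fin A.card, B.orderEmbOfFin h j ≤ A.orderEmbOfFin rfl j)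
      ↔ ∀ i, pcnt A i ≤ pcnt B i := by
  constructor
  · intro hpt i
    rw [pcnt_eq_card A rfl i, pcnt_eq_card B h i]
    apply Finset.card_le_card
    intro j hj
    simp only [Finset.mem_filter, Finset.mem_univ, true_and] at hj ⊢
    have := hpt j
    omega
  · intro hpre j
    by_contra hlt
    push_neg at hlt
    set i : ℕ := (A.orderEmbOfFin rfl j : ℕ) + 1 with hidef
    have h1 := hpre i
    rw [pcnt_eq_card A rfl i, pcnt_eq_card B h i] at h1
    have hBsub : univ.filter (fun j' : Fin A.card => ((B.orderEmbOfFin h j' : Fin n) : ℕ) < i)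
        ⊆ univ.filter (fun j' : Fin A.card => j' < j) := by
      intro j' hj'
      simp only [Finset.mem_filter, Finset.mem_univ, true_and] at hj' ⊢
      by_contra hge
      push_neg at hge
      have h2 : B.orderEmbOfFin h j ≤ B.orderEmbOfFin h j' :=
        (B.orderEmbOfFin h).monotone hge
      have h3 : (A.orderEmbOfFin rfl j : ℕ) < (B.orderEmbOfFin h j : ℕ) := hlt
      have h4 : ((B.orderEmbOfFin h j : Fin n) : ℕ) ≤ ((B.orderEmbOfFin h j' : Fin n) : ℕ) := h2
      omega
    have hAsup : univ.filter (fun j' : Fin A.card => j' ≤ j)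
        ⊆ univ.filter (fun j' : Fin A.card => ((A.orderEmbOfFin rfl j' : Fin n) : ℕ) < i) := by
      intro j' hj'
      simp only [Finset.mem_filter, Finset.mem_univ, true_and] at hj' ⊢
      have h2 : A.orderEmbOfFin rfl j' ≤ A.orderEmbOfFin rfl j :=
        (A.orderEmbOfFin rfl).monotone hj'
      have h4 : ((A.orderEmbOfFin rfl j' : Fin n) : ℕ) ≤ ((A.orderEmbOfFin rfl j : Fin n) : ℕ) := h2
      omega
    have hsub2 : (univ.filter (fun j' : Fin A.card => j' < j)) ∪ {j}
        ⊆ univ.filter (fun j' : Fin A.card => j' ≤ j) := by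
      intro x hx
      simp only [Finset.mem_union, Finset.mem_filter, Finset.mem_univ, true_and,
        Finset.mem_singleton] at hx ⊢
      rcases hx with hx | rfl
      · exact le_of_lt hx
      · exact le_refl _
    have hdisj : Disjoint (univ.filter (fun j' : Fin A.card => j' < j)) ({j} : Finset (Fin A.card)) := by
      rw [Finset.disjoint_singleton_right]
      simp
    have hcu := Finset.card_le_card hsub2
    rw [Finset.card_union_of_disjoint hdisj, Finset.card_singleton] at hcu
    have hc1 := Finset.card_le_card hAsup
    have hc2 := Finset.card_le_card hBsub
    omega

lemma eq_canon (f : PMap n) (h1 : IsInj f) (h2 : IsOrd f) :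
    ∃ h : (ranF f).card = (domF f).card, f = canon (domF f) (ranF f) h := by
  classical
  set k := (domF f).card with hk
  set d := (domF f).orderEmbOfFin (rfl : (domF f).card = k) with hd
  have hmemd : ∀ j : Fin k, d j ∈ domF f := fun j => Finset.orderEmbOfFin_mem _ _ j
  have hsome : ∀ j : Fin k, (f (d j)).isSome := by
    intro j
    have := hmemd j
    simpa [domF] using this
  have hfd : ∀ j, f (d j) = some ((f (d j)).get (hsome j)) :=
    fun j => (Option.some_get (hsome j)).symm
  set g : Fin k → Fin n := fun j => (f (d j)).get (hsome j) with hg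
  have hgmono : StrictMono g := by
    intro j j' hjj
    exact h2 _ _ _ _ (hfd j) (hfd j') (d.strictMono hjj)
  have hran : ranF f = Finset.image g univ := by
    ext a
    simp only [ranF, Finset.mem_filter, Finset.mem_univ, true_and, Finset.mem_image]
    constructor
    · rintro ⟨i, hfi⟩
      have hidom : i ∈ domF f := by simp [domF, hfi]
      have : i ∈ Set.range ⇑d := by
        rw [hd, Finset.range_orderEmbOfFin]; exact_mod_cast hidom
      obtain ⟨j, hj⟩ := this
      refine ⟨j, ?_⟩
      have h5 : f (d j) = some a := by rw [hj, hfi]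
      exact Option.some.inj ((hfd j).symm.trans h5)
    · rintro ⟨j, rfl⟩
      exact ⟨d j, hfd j⟩
  have hcard : (ranF f).card = k := by
    rw [hran, Finset.card_image_of_injective _ hgmono.injective, card_univ, Fintype.card_fin]
  refine ⟨hcard, ?_⟩
  have hgemb : g = ⇑((ranF f).orderEmbOfFin hcard) :=
    Finset.orderEmbOfFin_unique hcard
      (fun x => by rw [hran]; exact Finset.mem_image_of_mem g (Finset.mem_univ x)) hgmono
  funext i
  by_cases hi : i ∈ domF f
  · set j := ((domF f).orderIsoOfFin (rfl : (domF f).card = k)).symm ⟨i, hi⟩ with hj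
    have hdj : d j = i := by
      rw [hd]
      rw [← Finset.coe_orderIsoOfFin_apply (domF f) (rfl : (domF f).card = k) j, hj,
        OrderIso.apply_symm_apply]
    have hcanon : canon (domF f) (ranF f) hcard i = some ((ranF f).orderEmbOfFin hcard j) := by
      unfold canon
      rw [dif_pos hi]
    rw [hcanon, ← hdj, hfd j]
    congr 1
    exact congrFun hgemb j
  · have hnone : f i = none := by
      cases hfi : f i with
      | none => rfl
      | some a => exact absurd (by simp [domF, hfi] : i ∈ domF f) hi
    unfold canon
    rw [dif_neg hi, hnone]

/-- The equivalence between the right planar rook monoid and good pairs of finsets. -/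
def equivARP (n : ℕ) : {f : PMap n // IsInj f ∧ IsOrd f ∧ IsRtop f}
    ≃ {q : Finset (Fin n) × Finset (Fin n) //
        q.1.card = q.2.card ∧ ∀ i, pcnt q.1 i ≤ pcnt q.2 i} where
  toFun f := ⟨(domF f.1, ranF f.1), by
    obtain ⟨h1, h2, h3⟩ := f.2
    obtain ⟨hc, hcanon⟩ := eq_canon f.1 h1 h2
    refine ⟨hc.symm, ?_⟩
    rw [← ptwise_iff (domF f.1) (ranF f.1) hc, ← rtop_iff (domF f.1) (ranF f.1) hc]
    rwa [← hcanon]⟩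
  invFun q := ⟨canon q.1.1 q.1.2 q.2.1.symm,
    isInj_canon _ _ _, isOrd_canon _ _ _,
    (rtop_iff _ _ _).mpr ((ptwise_iff _ _ _).mpr q.2.2)⟩
  left_inv f := by
    apply Subtype.ext
    obtain ⟨hc, hcanon⟩ := eq_canon f.1 f.2.1 f.2.2.1
    exact hcanon.symm
  right_inv q := by
    apply Subtype.ext
    exact Prod.ext (domF_canon _ _ _) (ranF_canon _ _ _)

end RPaux
end T4

/-- The number of elements of the right planar rook monoid `RP_n` is the Catalan number
`C_{n+1} = (2n+2 choose n+1)/(n+2)`. -/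
theorem card_right_planar_rook_monoid (n : ℕ) :
    Nat.card {f : PMap n // IsInj f ∧ IsOrd f ∧ IsRtop f} = catalan (n + 1) ∧
      catalan (n + 1) = (2 * n + 2).choose (n + 1) / (n + 2) := by
  constructor
  · rw [Nat.card_congr ((RPaux.equivARP n).trans (RPaux.equivGBDyck n)),
      Nat.card_eq_fintype_card]
    exact DyckWord.card_dyckWord_semilength_eq_catalan (n + 1)
  · rw [catalan_eq_centralBinom_div, Nat.centralBinom]
    have h1 : 2 * (n + 1) = 2 * n + 2 := by ring
    have h2 : n + 1 + 1 = n + 2 := by ring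
    rw [h1, h2]
end

section
/- There is a bijection between RP_n and the set of sequences of length 2(n+1) consisting of exactly n+1 entries equal to +1 and n+1 entries equal to −1, all of whose partial sums are nonnegative. -/
infixl:70 " ⬝ " => pcomp

section PartA
variable {n : ℕ}

def hits (f : PMap n) (t : ℕ) : Finset (Fin n) :=
  Finset.univ.filter (fun i => ∃ v, f i = some v ∧ t ≤ (v : ℕ))

def cset (f : PMap n) (t : ℕ) : Finset ℕ := insert n ((hits f t).image Fin.val)

lemma cset_nonempty (f : PMap n) (t : ℕ) : (cset f t).Nonempty :=
  ⟨n, Finset.mem_insert_self _ _⟩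

def cval (f : PMap n) (t : ℕ) : ℕ := (cset f t).min' (cset_nonempty f t)

lemma mem_cset_iff {f : PMap n} {t y : ℕ} :
    y ∈ cset f t ↔ y = n ∨ ∃ i : Fin n, (∃ v, f i = some v ∧ t ≤ (v:ℕ)) ∧ (i:ℕ) = y := by
  simp [cset, hits]

lemma cval_le (f : PMap n) (t : ℕ) : cval f t ≤ n :=
  Finset.min'_le _ _ (Finset.mem_insert_self _ _)

lemma cval_mono (f : PMap n) : Monotone (cval f) := by
  intro a b hab
  apply Finset.le_min'
  intro y hy
  rcases mem_cset_iff.mp hy with h | ⟨i, ⟨v, hv, hle⟩, hiy⟩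
  · subst h; exact cval_le f a
  · exact Finset.min'_le _ _ (mem_cset_iff.mpr (Or.inr ⟨i, ⟨v, hv, le_trans hab hle⟩, hiy⟩))

lemma le_cval (f : PMap n) (hR : IsRtop f) (t : ℕ) (ht : t ≤ n) : t ≤ cval f t := by
  apply Finset.le_min'
  intro y hy
  rcases mem_cset_iff.mp hy with h | ⟨i, ⟨v, hv, hle⟩, hiy⟩
  · omega
  · have := hR i v hv
    have : (v:ℕ) ≤ (i:ℕ) := this
    omega

lemma cval_eq_of_apply (f : PMap n) (hO : IsOrd f) {i v : Fin n} (h : f i = some v) :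
    cval f (v : ℕ) = i := by
  apply le_antisymm
  · exact Finset.min'_le _ _ (mem_cset_iff.mpr (Or.inr ⟨i, ⟨v, h, le_refl _⟩, rfl⟩))
  · apply Finset.le_min'
    intro y hy
    rcases mem_cset_iff.mp hy with hh | ⟨i', ⟨v', hv', hle⟩, hiy⟩
    · have := i.isLt; omega
    · by_contra hlt
      push_neg at hlt
      have hi' : i' < i := by
        rw [Fin.lt_def]; omega
      have := hO i' i v' v hv' h hi'
      rw [Fin.lt_def] at this
      omega

lemma cval_succ_gt (f : PMap n) (hO : IsOrd f) {i v : Fin n} (h : f i = some v) :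
    (i : ℕ) < cval f ((v : ℕ) + 1) := by
  rw [cval, Finset.lt_min'_iff]
  intro y hy
  rcases mem_cset_iff.mp hy with hh | ⟨i', ⟨v', hv', hle⟩, hiy⟩
  · have := i.isLt; omega
  · by_contra hlt
    push_neg at hlt
    have : i' ≤ i := by rw [Fin.le_def]; omega
    rcases lt_or_eq_of_le this with h1 | h1
    · have := hO i' i v' v hv' h h1
      rw [Fin.lt_def] at this
      omega
    · subst h1
      rw [h] at hv'
      simp at hv'
      subst hv'
      omega

lemma cval_witness (f : PMap n) (t : ℕ) (h : cval f t < n) :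
    ∃ i v, f i = some v ∧ t ≤ (v:ℕ) ∧ (i:ℕ) = cval f t := by
  have hmem : cval f t ∈ cset f t := Finset.min'_mem (cset f t) (cset_nonempty f t)
  rcases mem_cset_iff.mp hmem with hh | ⟨i, ⟨v, hv, hle⟩, hiy⟩
  · omega
  · exact ⟨i, v, hv, hle, hiy⟩

lemma cval_char_back (f : PMap n) {t : ℕ} (ht : t < n) {i : Fin n}
    (h1 : cval f t = (i : ℕ)) (h2 : cval f t < cval f (t + 1)) :
    f i = some ⟨t, ht⟩ := by
  obtain ⟨i0, v, hv, hle, hi0⟩ := cval_witness f t (h1 ▸ i.isLt)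
  have hii : i0 = i := Fin.ext (by omega)
  subst hii
  have hvt : (v : ℕ) = t := by
    by_contra hne
    have hvt1 : t + 1 ≤ (v:ℕ) := by omega
    have : cval f (t+1) ≤ (i0 : ℕ) :=
      Finset.min'_le _ _ (mem_cset_iff.mpr (Or.inr ⟨i0, ⟨v, hv, hvt1⟩, rfl⟩))
    omega
  rw [hv]
  congr 1
  exact Fin.ext hvt

end PartA

section PartA2
variable {n : ℕ}

def cOf (f : PMap n) : Fin (n+1) → Fin (n+1) :=
  fun t => ⟨cval f (t : ℕ), Nat.lt_succ_of_le (cval_le f t)⟩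

def fprop (c : Fin (n+1) → Fin (n+1)) (i : Fin n) (t : Fin n) : Prop :=
  ((c t.castSucc : Fin (n+1)) : ℕ) = (i : ℕ) ∧ ((c t.castSucc : Fin (n+1)) : ℕ) < ((c t.succ : Fin (n+1)) : ℕ)

instance (c : Fin (n+1) → Fin (n+1)) (i : Fin n) : DecidablePred (fprop c i) := by
  intro t; unfold fprop; infer_instance

def fOf (c : Fin (n+1) → Fin (n+1)) : PMap n := fun i => Fin.find? (fun t => decide (fprop c i t))

lemma fprop_unique {c : Fin (n+1) → Fin (n+1)} (hc : Monotone c) {i : Fin n}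
    {t1 t2 : Fin n} (h1 : fprop c i t1) (h2 : fprop c i t2) : t1 = t2 := by
  have key : ∀ s1 s2 : Fin n, s1 < s2 → fprop c i s1 → fprop c i s2 → False := by
    intro s1 s2 hs hp1 hp2
    have hs' : (s1 : ℕ) < (s2 : ℕ) := Fin.lt_def.mp hs
    have hle : s1.succ ≤ s2.castSucc := by
      rw [Fin.le_def, Fin.val_succ, Fin.coe_castSucc]
      exact hs'
    have h3 : ((c s1.succ : Fin (n+1)) : ℕ) ≤ ((c s2.castSucc : Fin (n+1)) : ℕ) :=
      Fin.le_def.mp (hc hle)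
    have h4 := hp1.2
    have h5 : ((c s1.castSucc : Fin (n+1)) : ℕ) = ((c s2.castSucc : Fin (n+1)) : ℕ) := by
      rw [hp1.1, hp2.1]
    omega
  by_contra hne
  rcases Ne.lt_or_gt hne with h | h
  · exact key _ _ h h1 h2
  · exact key _ _ h h2 h1

lemma fOf_eq_some_iff {c : Fin (n+1) → Fin (n+1)} (hc : Monotone c) {i : Fin n} {t : Fin n} :
    fOf c i = some t ↔ fprop c i t := by
  constructor
  · intro h
    exact of_decide_eq_true ((Fin.find?_eq_some_iff).mp h).1
  · intro h
    rw [fOf, Fin.find?_eq_some_iff]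
    exact ⟨decide_eq_true h, fun j hj => decide_eq_false (fun hp => absurd (fprop_unique hc h hp) (ne_of_gt hj))⟩

lemma fOf_isInj {c : Fin (n+1) → Fin (n+1)} (hc : Monotone c) : IsInj (fOf c) := by
  intro i j a hi hj
  have h1 := (fOf_eq_some_iff hc).mp hi
  have h2 := (fOf_eq_some_iff hc).mp hj
  apply Fin.ext
  have e1 := h1.1
  have e2 := h2.1
  omega

lemma fOf_isOrd {c : Fin (n+1) → Fin (n+1)} (hc : Monotone c) : IsOrd (fOf c) := by
  intro i j a b hi hj hij
  have h1 := (fOf_eq_some_iff hc).mp hi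
  have h2 := (fOf_eq_some_iff hc).mp hj
  have hij' : (i : ℕ) < (j : ℕ) := Fin.lt_def.mp hij
  have e1 := h1.1
  have e2 := h2.1
  rw [Fin.lt_def]
  by_contra hba
  push_neg at hba
  have hba' : (b : ℕ) ≤ (a : ℕ) := hba
  rcases Nat.lt_or_ge (b : ℕ) (a : ℕ) with h | h
  · have hle : b.succ ≤ a.castSucc := by
      rw [Fin.le_def, Fin.val_succ, Fin.coe_castSucc]; omega
    have h3 : ((c b.succ : Fin (n+1)) : ℕ) ≤ ((c a.castSucc : Fin (n+1)) : ℕ) :=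
      Fin.le_def.mp (hc hle)
    have h4 := h2.2
    omega
  · have hab : a = b := Fin.ext (by omega)
    subst hab
    omega

lemma fOf_isRtop {c : Fin (n+1) → Fin (n+1)} (hc : Monotone c) (hle : ∀ t, t ≤ c t) :
    IsRtop (fOf c) := by
  intro i a h
  have h1 := (fOf_eq_some_iff hc).mp h
  have h2 : ((a.castSucc : Fin (n+1)) : ℕ) ≤ ((c a.castSucc : Fin (n+1)) : ℕ) :=
    Fin.le_def.mp (hle a.castSucc)
  rw [Fin.coe_castSucc] at h2
  have e1 := h1.1
  rw [Fin.le_def]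
  omega

lemma cOf_val (f : PMap n) (t : Fin (n+1)) : ((cOf f t : Fin (n+1)) : ℕ) = cval f (t : ℕ) := rfl

lemma fOf_cOf (f : PMap n) (hO : IsOrd f) : fOf (cOf f) = f := by
  have hmono : Monotone (cOf f) := by
    intro a b hab
    rw [Fin.le_def, cOf_val, cOf_val]
    exact cval_mono f (Fin.le_def.mp hab)
  funext i
  cases hfi : f i with
  | none =>
    rw [fOf, Fin.find?_eq_none_iff]
    intro t
    apply decide_eq_false
    intro hp
    have h1 : cval f (t : ℕ) = (i : ℕ) := by
      have := hp.1
      rw [cOf_val, Fin.coe_castSucc] at this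
      exact this
    have h2 : cval f (t : ℕ) < cval f ((t : ℕ) + 1) := by
      have := hp.2
      rw [cOf_val, cOf_val, Fin.coe_castSucc, Fin.val_succ] at this
      exact this
    have := cval_char_back f t.isLt h1 h2
    rw [hfi] at this
    exact Option.some_ne_none _ this.symm
  | some v =>
    rw [fOf_eq_some_iff hmono]
    have h1 := cval_succ_gt f hO hfi
    have h2 := cval_eq_of_apply f hO hfi
    constructor
    · rw [cOf_val, Fin.coe_castSucc]
      exact h2
    · rw [cOf_val, cOf_val, Fin.coe_castSucc, Fin.val_succ]
      omega

lemma cOf_fOf (c : Fin (n+1) → Fin (n+1)) (hc : Monotone c) (hle : ∀ t, t ≤ c t) :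
    cOf (fOf c) = c := by
  funext t
  apply Fin.ext
  rw [cOf_val]
  apply le_antisymm
  · rcases Nat.lt_or_ge ((c t : ℕ)) n with hlt | hge
    · set S : Finset (Fin (n+1)) := Finset.univ.filter (fun s => c s = c t) with hS
      have hSne : S.Nonempty := ⟨t, by simp [hS]⟩
      set v := S.max' hSne with hv
      have hvS : v ∈ S := Finset.max'_mem _ _
      have hcv : c v = c t := by simpa [hS] using hvS
      have htv : (t : ℕ) ≤ (v : ℕ) := Fin.le_def.mp (Finset.le_max' _ _ (by simp [hS]))
      have hvn : (v : ℕ) < n := by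
        have h1 : (v : ℕ) ≤ (c v : ℕ) := Fin.le_def.mp (hle v)
        rw [hcv] at h1
        omega
      set w : Fin n := ⟨(v : ℕ), hvn⟩ with hw
      have hwc : w.castSucc = v := Fin.ext rfl
      have hsucc : ((c w.castSucc : Fin (n+1)) : ℕ) < ((c w.succ : Fin (n+1)) : ℕ) := by
        have hle1 : w.castSucc ≤ w.succ := by
          rw [Fin.le_def, Fin.val_succ, Fin.coe_castSucc]; omega
        rcases lt_or_eq_of_le (Fin.le_def.mp (hc hle1)) with h | h
        · exact h
        · exfalso
          have hmem : w.succ ∈ S := by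
            simp only [hS, Finset.mem_filter, Finset.mem_univ, true_and]
            rw [← hcv, ← hwc]
            exact Fin.ext h.symm
          have hle2 : (w.succ : ℕ) ≤ (v : ℕ) := Fin.le_def.mp (Finset.le_max' _ _ hmem)
          rw [Fin.val_succ] at hle2
          simp [hw] at hle2
      have hig : fOf c ⟨(c t : ℕ), hlt⟩ = some w := by
        rw [fOf_eq_some_iff hc]
        constructor
        · rw [hwc, hcv]
        · exact hsucc
      apply Finset.min'_le
      apply mem_cset_iff.mpr
      right
      exact ⟨⟨(c t : ℕ), hlt⟩, ⟨w, hig, by simpa [hw] using htv⟩, rfl⟩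
    · have h1 := cval_le (fOf c) (t : ℕ)
      omega
  · apply Finset.le_min'
    intro y hy
    rcases mem_cset_iff.mp hy with h | ⟨i, ⟨w, hw, hle'⟩, hiy⟩
    · have := (c t).isLt; omega
    · have hp := (fOf_eq_some_iff hc).mp hw
      have hmc : c t ≤ c w.castSucc := hc (by rw [Fin.le_def, Fin.coe_castSucc]; exact hle')
      have := Fin.le_def.mp hmc
      have e1 := hp.1
      omega

end PartA2


/-- number of non-(-1) entries strictly before the (t+1)-th occurrence of -1 -/
def ob : List ℤ → ℕ → ℕ
  | [], _ => 0
  | x :: L, t => if x = -1 then (match t with | 0 => 0 | t+1 => ob L t) else 1 + ob L t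

def enc : ℕ → ℕ → (ℕ → ℕ) → List ℤ
  | 0, _, _ => []
  | k+1, p, c => List.replicate (c 0 + 1 - p) 1 ++ (-1) :: enc k (c 0 + 1) (fun t => c (t+1))

lemma ob_cons_one (L : List ℤ) (t : ℕ) : ob (1 :: L) t = 1 + ob L t := by
  simp [ob]

lemma ob_cons_neg_zero (L : List ℤ) : ob (-1 :: L) 0 = 0 := by simp [ob]

lemma ob_cons_neg_succ (L : List ℤ) (t : ℕ) : ob (-1 :: L) (t+1) = ob L t := by simp [ob]

lemma ob_replicate_append (r : ℕ) (L : List ℤ) (t : ℕ) :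
    ob (List.replicate r 1 ++ L) t = r + ob L t := by
  induction r with
  | zero => simp
  | succ r ih => simp [List.replicate_succ, ob_cons_one, ih]; omega

lemma ob_mono (L : List ℤ) : Monotone (ob L) := by
  induction L with
  | nil => intro a b _; simp [ob]
  | cons x L ih =>
    intro a b hab
    by_cases hx : x = -1
    · subst hx
      match a, b with
      | 0, 0 => simp
      | 0, b+1 => simp [ob_cons_neg_zero]
      | a+1, b+1 =>
        rw [ob_cons_neg_succ, ob_cons_neg_succ]
        exact ih (by omega)
    · simp [ob, hx]
      exact ih hab

lemma ob_le_count (L : List ℤ) (t : ℕ) (hL : ∀ x ∈ L, x = 1 ∨ x = -1) :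
    ob L t ≤ L.count 1 := by
  induction L generalizing t with
  | nil => simp [ob]
  | cons x L ih =>
    have hx := hL x (by simp)
    have hL' : ∀ x ∈ L, x = 1 ∨ x = -1 := fun y hy => hL y (by simp [hy])
    rcases hx with h1 | h1 <;> subst h1
    · rw [ob_cons_one]
      have := ih t hL'
      simp [List.count_cons]
      omega
    · have : ((-1:ℤ) = 1) = False := by norm_num
      rw [List.count_cons]
      match t with
      | 0 => rw [ob_cons_neg_zero]; positivity
      | t+1 =>
        rw [ob_cons_neg_succ]
        have := ih t hL'
        simp only [show ((-1:ℤ) == 1) = false by decide]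
        omega

lemma ballot_ob (L : List ℤ) (s : ℤ) (t : ℕ)
    (hL : ∀ x ∈ L, x = 1 ∨ x = -1)
    (hb : ∀ m : ℕ, 0 ≤ s + ((L.take m).sum))
    (ht : t < L.count (-1)) :
    (t : ℤ) + 1 ≤ s + ob L t := by
  induction L generalizing s t with
  | nil => simp at ht
  | cons x L ih =>
    have hL' : ∀ x ∈ L, x = 1 ∨ x = -1 := fun y hy => hL y (by simp [hy])
    rcases hL x (by simp) with h1 | h1 <;> subst h1
    · rw [ob_cons_one]
      have hb' : ∀ m : ℕ, 0 ≤ (s + 1) + ((L.take m).sum) := by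
        intro m
        have := hb (m + 1)
        simp [List.take_succ_cons] at this
        linarith
      have ht' : t < L.count (-1) := by
        rw [List.count_cons] at ht; simpa using ht
      have := ih (s+1) t hL' hb' ht'
      push_cast
      linarith
    · have hs : 1 ≤ s := by
        have := hb 1
        simp [List.take_succ_cons] at this
        linarith
      match t with
      | 0 => rw [ob_cons_neg_zero]; push_cast; linarith
      | t+1 =>
        rw [ob_cons_neg_succ]
        have hb' : ∀ m : ℕ, 0 ≤ (s - 1) + ((L.take m).sum) := by
          intro m
          have := hb (m + 1)
          simp [List.take_succ_cons] at this
          linarith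
        have ht' : t < L.count (-1) := by
          rw [List.count_cons] at ht; simp at ht; omega
        have := ih (s-1) t hL' hb' ht'
        push_cast
        linarith

lemma enc_mem (k p : ℕ) (c : ℕ → ℕ) : ∀ x ∈ enc k p c, x = 1 ∨ x = -1 := by
  induction k generalizing p c with
  | zero => simp [enc]
  | succ k ih =>
    intro x hx
    simp only [enc, List.mem_append, List.mem_replicate, List.mem_cons] at hx
    rcases hx with h | h | h
    · exact Or.inl h.2
    · exact Or.inr h
    · exact ih _ _ x h

lemma enc_count_neg (k p : ℕ) (c : ℕ → ℕ) : (enc k p c).count (-1) = k := by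
  induction k generalizing p c with
  | zero => simp [enc]
  | succ k ih =>
    rw [enc, List.count_append, List.count_cons]
    simp [List.count_replicate, ih]

lemma enc_count_one (k p : ℕ) (c : ℕ → ℕ) (hp : p ≤ c 0 + 1) (hc : Monotone c) :
    p + (enc (k+1) p c).count 1 = c k + 1 := by
  induction k generalizing p c with
  | zero =>
    rw [enc, List.count_append, List.count_cons]
    simp [enc, List.count_replicate]
    omega
  | succ k ih =>
    rw [enc, List.count_append, List.count_cons]
    have h2 := ih (c 0 + 1) (fun t => c (t+1))
      (by simpa using Nat.succ_le_succ (hc (Nat.le_succ 0)))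
      (fun a b hab => hc (by omega))
    simp only [List.count_replicate]
    simp only [show ((-1:ℤ) == 1) = false by decide, cond_false] at *
    simp at h2 ⊢
    omega

lemma length_eq_counts (L : List ℤ) (hL : ∀ x ∈ L, x = 1 ∨ x = -1) :
    L.length = L.count 1 + L.count (-1) := by
  induction L with
  | nil => simp
  | cons x L ih =>
    have hL' : ∀ x ∈ L, x = 1 ∨ x = -1 := fun y hy => hL y (by simp [hy])
    have := ih hL'
    rcases hL x (by simp) with h | h <;> subst h <;>
      simp [List.count_cons, this] <;> omega

lemma sum_eq_counts (L : List ℤ) (hL : ∀ x ∈ L, x = 1 ∨ x = -1) :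
    L.sum = (L.count 1 : ℤ) - (L.count (-1) : ℤ) := by
  induction L with
  | nil => simp
  | cons x L ih =>
    have hL' : ∀ x ∈ L, x = 1 ∨ x = -1 := fun y hy => hL y (by simp [hy])
    have := ih hL'
    rcases hL x (by simp) with h | h <;> subst h <;>
      simp [List.count_cons, this] <;> push_cast <;> ring

lemma enc_ballot (k q p : ℕ) (c : ℕ → ℕ) (hc : Monotone c) (hp : p ≤ c 0 + 1)
    (hqp : q ≤ p) (hq : ∀ t, t < k → q + t ≤ c t) :
    ∀ m : ℕ, (q : ℤ) ≤ (p : ℤ) + ((enc k p c).take m).sum := by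
  induction k generalizing q p c with
  | zero => intro m; simp [enc]; exact_mod_cast hqp
  | succ k ih =>
    intro m
    rw [enc, List.take_append]
    rw [List.sum_append, List.take_replicate, List.sum_replicate, List.length_replicate]
    rcases Nat.eq_zero_or_pos (m - (c 0 + 1 - p)) with h0 | h0
    · rw [h0]
      simp only [List.take_zero, List.sum_nil, add_zero, nsmul_eq_mul, mul_one]
      have h1 : (0:ℤ) ≤ ((m ⊓ (c 0 + 1 - p) : ℕ) : ℤ) := by positivity
      have hqp' : (q:ℤ) ≤ p := by exact_mod_cast hqp
      linarith
    · obtain ⟨m', hm'⟩ : ∃ m', m - (c 0 + 1 - p) = m' + 1 := ⟨_, (Nat.succ_pred_eq_of_pos h0).symm⟩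
      rw [hm']
      have hmin : min m (c 0 + 1 - p) = c 0 + 1 - p := by omega
      rw [hmin, List.take_succ_cons, List.sum_cons]
      have hIH := ih (q+1) (c 0 + 1) (fun t => c (t+1))
        (fun a b hab => hc (by omega))
        (by simpa using Nat.succ_le_succ (hc (Nat.le_succ 0)))
        (by have := hq 0 (by omega); omega)
        (fun t ht => by show q + 1 + t ≤ c (t+1); have := hq (t+1) (by omega); omega) m'
      simp only [nsmul_eq_mul, mul_one]
      have hr : ((c 0 + 1 - p : ℕ) : ℤ) = (c 0 : ℤ) + 1 - p := by
        rw [Nat.cast_sub hp]; push_cast; ring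
      push_cast at hIH ⊢
      rw [hr]
      linarith

lemma ob_enc (k p : ℕ) (c : ℕ → ℕ) (hc : Monotone c) (hp : p ≤ c 0 + 1) :
    ∀ t, t < k → p + ob (enc k p c) t = c t + 1 := by
  induction k generalizing p c with
  | zero => intro t ht; omega
  | succ k ih =>
    intro t ht
    rw [enc, ob_replicate_append]
    match t with
    | 0 => rw [ob_cons_neg_zero]; omega
    | t+1 =>
      rw [ob_cons_neg_succ]
      have := ih (c 0 + 1) (fun t => c (t+1))
        (fun a b hab => hc (by omega))
        (by simpa using Nat.succ_le_succ (hc (Nat.le_succ 0)))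
        t (by omega)
      omega

lemma enc_congr (k p : ℕ) (c c' : ℕ → ℕ) (h : ∀ t, t < k → c t = c' t) :
    enc k p c = enc k p c' := by
  induction k generalizing p c c' with
  | zero => rfl
  | succ k ih =>
    rw [enc, enc, h 0 (by omega)]
    congr 1
    congr 1
    exact ih _ _ _ (fun t ht => h (t+1) (by omega))

lemma exists_decomp (L : List ℤ) (hL : ∀ x ∈ L, x = 1 ∨ x = -1) (hm : (-1 : ℤ) ∈ L) :
    ∃ r L', L = List.replicate r 1 ++ (-1) :: L' := by
  induction L with
  | nil => simp at hm
  | cons x L ih =>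
    rcases hL x (by simp) with h | h <;> subst h
    · have hm' : (-1:ℤ) ∈ L := by simpa using hm
      obtain ⟨r, L', hrl⟩ := ih (fun y hy => hL y (by simp [hy])) hm'
      exact ⟨r + 1, L', by rw [hrl]; simp [List.replicate_succ]⟩
    · exact ⟨0, L, by simp⟩

lemma enc_of_ob (k : ℕ) : ∀ (p : ℕ) (L : List ℤ), (∀ x ∈ L, x = 1 ∨ x = -1) →
    L.count (-1) = k → (L = [] ∨ L.getLast? = some (-1)) →
    (k = 0 ∨ 1 ≤ p ∨ 1 ≤ ob L 0) →
    enc k p (fun t => p + ob L t - 1) = L := by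
  induction k with
  | zero =>
    intro p L hL hk hlast _
    rcases L.eq_nil_or_concat with h | ⟨M, x, h⟩
    · simp [h, enc]
    · exfalso
      subst h
      rcases hL x (by simp) with h1 | h1 <;> subst h1
      · rcases hlast with h2 | h2
        · simp at h2
        · simp [List.concat_eq_append, List.getLast?_append] at h2
      · simp [List.concat_eq_append, List.count_append] at hk
  | succ k ih =>
    intro p L hL hk hlast hp
    have hm : (-1:ℤ) ∈ L := by
      have : 0 < L.count (-1) := by omega
      exact List.count_pos_iff.mp this
    obtain ⟨r, L', rfl⟩ := exists_decomp L hL hm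
    have hob0 : ob (List.replicate r 1 ++ (-1) :: L') 0 = r := by
      rw [ob_replicate_append, ob_cons_neg_zero]; omega
    have hobs : ∀ t, ob (List.replicate r 1 ++ (-1) :: L') (t+1) = r + ob L' t := by
      intro t; rw [ob_replicate_append, ob_cons_neg_succ]
    have hpr : 1 ≤ p + r := by
      rcases hp with h | h | h
      · omega
      · omega
      · rw [hob0] at h; omega
    have hL'' : ∀ x ∈ L', x = 1 ∨ x = -1 := fun y hy => hL y (by simp [hy])
    have hk' : L'.count (-1) = k := by
      rw [List.count_append, List.count_cons] at hk
      simp [List.count_replicate] at hk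
      omega
    have hlast' : L' = [] ∨ L'.getLast? = some (-1) := by
      rcases L'.eq_nil_or_concat with h | ⟨M, x, hMx⟩
      · exact Or.inl h
      · right
        rcases hlast with h2 | h2
        · simp at h2
        · have hg : (List.replicate r 1 ++ -1 :: L').getLast? = some x := by
            rw [hMx, List.concat_eq_append,
              show List.replicate r 1 ++ -1 :: (M ++ [x]) = (List.replicate r 1 ++ -1 :: M) ++ [x] by simp]
            exact List.getLast?_concat
          rw [hg] at h2
          rw [hMx, List.concat_eq_append, List.getLast?_concat]
          exact h2
    simp only [enc]
    rw [hob0]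
    have h1 : p + r - 1 + 1 - p = r := by omega
    have h2 : p + r - 1 + 1 = p + r := by omega
    rw [h1, h2]
    have h3 : enc k (p+r) (fun t => p + ob (List.replicate r 1 ++ -1 :: L') (t+1) - 1) = L' := by
      rw [enc_congr k (p+r) _ (fun t => (p+r) + ob L' t - 1) (fun t _ => by
        show p + ob (List.replicate r 1 ++ -1 :: L') (t+1) - 1 = (p+r) + ob L' t - 1
        rw [hobs]; omega)]
      exact ih (p+r) L' hL'' hk' hlast' (Or.inr (Or.inl hpr))
    rw [h3]


section Assembly
variable {n : ℕ}

def extc (c : Fin (n+1) → Fin (n+1)) : ℕ → ℕ :=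
  fun t => (c ⟨min t n, by omega⟩ : ℕ)

lemma extc_val (c : Fin (n+1) → Fin (n+1)) (t : ℕ) :
    extc c t = (c ⟨min t n, by omega⟩ : ℕ) := rfl

lemma extc_eq (c : Fin (n+1) → Fin (n+1)) (t : Fin (n+1)) :
    extc c (t : ℕ) = (c t : ℕ) := by
  rw [extc_val]
  congr 2
  apply Fin.ext
  simp
  omega

lemma extc_mono {c : Fin (n+1) → Fin (n+1)} (hc : Monotone c) : Monotone (extc c) := by
  intro a b hab
  rw [extc_val, extc_val]
  exact Fin.le_def.mp (hc (by rw [Fin.le_def]; simp; omega))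

lemma last_neg (L : List ℤ) (hmem : ∀ x ∈ L, x = 1 ∨ x = -1)
    (heq : L.count 1 = L.count (-1)) (hballot : ∀ m : ℕ, 0 ≤ (L.take m).sum)
    (hne : L ≠ []) : L.getLast? = some (-1) := by
  have hsum : L.sum = 0 := by
    rw [sum_eq_counts L hmem, heq]; ring
  rcases L.eq_nil_or_concat with h | ⟨M, x, hMx⟩
  · exact absurd h hne
  · rw [List.concat_eq_append] at hMx
    rcases hmem x (by rw [hMx]; simp) with h1 | h1
    · exfalso
      have hM : (L.take M.length).sum = L.sum - x := by
        rw [hMx, List.take_left, List.sum_append]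
        simp
      have := hballot M.length
      rw [hM, hsum, h1] at this
      linarith
    · rw [hMx, List.getLast?_concat, h1]

theorem rp_equiv_ballot_sequences' :
    Nonempty ({f : PMap n // IsInj f ∧ IsOrd f ∧ IsRtop f} ≃
      {L : List ℤ // L.length = 2 * (n + 1) ∧ (∀ x ∈ L, x = 1 ∨ x = -1) ∧
        L.count 1 = n + 1 ∧ ∀ m : ℕ, 0 ≤ (L.take m).sum}) := by
  set Cty := {c : Fin (n+1) → Fin (n+1) // Monotone c ∧ ∀ t, t ≤ c t} with hCty
  have e1 : {f : PMap n // IsInj f ∧ IsOrd f ∧ IsRtop f} ≃ Cty := by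
    refine ⟨fun f => ⟨cOf f.1, ?_, ?_⟩, fun c => ⟨fOf c.1, fOf_isInj c.2.1, fOf_isOrd c.2.1,
      fOf_isRtop c.2.1 c.2.2⟩, fun f => Subtype.ext (fOf_cOf f.1 f.2.2.1),
      fun c => Subtype.ext (cOf_fOf c.1 c.2.1 c.2.2)⟩
    · intro a b hab
      rw [Fin.le_def, cOf_val, cOf_val]
      exact cval_mono f.1 (Fin.le_def.mp hab)
    · intro t
      rw [Fin.le_def, cOf_val]
      exact le_cval f.1 f.2.2.2 (t : ℕ) (by omega)
  have e2 : Cty ≃ {L : List ℤ // L.length = 2 * (n + 1) ∧ (∀ x ∈ L, x = 1 ∨ x = -1) ∧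
      L.count 1 = n + 1 ∧ ∀ m : ℕ, 0 ≤ (L.take m).sum} := by
    have extc_top : ∀ c : Cty, extc c.1 n = n := by
      intro c
      have h1 := (extc_eq c.1 (Fin.last n))
      have h2 := c.2.2 (Fin.last n)
      have h3 := (c.1 (Fin.last n)).isLt
      rw [Fin.le_def] at h2
      simp [Fin.last] at h1 h2
      omega
    have hcount1 : ∀ c : Cty, (enc (n+1) 0 (extc c.1)).count 1 = n + 1 := by
      intro c
      have := enc_count_one n 0 (extc c.1) (Nat.zero_le _) (extc_mono c.2.1)
      rw [extc_top c] at this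
      omega
    refine ⟨fun c => ⟨enc (n+1) 0 (extc c.1), ?_, enc_mem _ _ _, hcount1 c, ?_⟩,
      fun L => ⟨fun t => ⟨ob L.1 (t : ℕ) - 1, ?_⟩, ?_, ?_⟩, ?_, ?_⟩
    · rw [length_eq_counts _ (enc_mem _ _ _), enc_count_neg, hcount1 c]
      ring
    · intro m
      have := enc_ballot (n+1) 0 0 (extc c.1) (extc_mono c.2.1) (Nat.zero_le _)
        (le_refl 0) ?_ m
      · simpa using this
      · intro t ht
        have h1 := extc_eq c.1 ⟨t, ht⟩
        have h2 := Fin.le_def.mp (c.2.2 ⟨t, ht⟩)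
        simp at h1 h2 ⊢
        omega
    · obtain ⟨hlen, hmem, hc1, hballot⟩ := L.2
      have := ob_le_count L.1 (t : ℕ) hmem
      omega
    · intro a b hab
      rw [Fin.le_def]
      obtain ⟨hlen, hmem, hc1, hballot⟩ := L.2
      simp only []
      exact Nat.sub_le_sub_right (ob_mono L.1 (Fin.le_def.mp hab)) 1
    · intro t
      obtain ⟨hlen, hmem, hc1, hballot⟩ := L.2
      have hcn : L.1.count (-1) = n + 1 := by
        have := length_eq_counts L.1 hmem
        omega
      have := ballot_ob L.1 0 (t : ℕ) hmem (by simpa using hballot) (by rw [hcn]; omega)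
      rw [Fin.le_def]
      simp only []
      have h2 : (t : ℕ) + 1 ≤ ob L.1 (t : ℕ) := by exact_mod_cast (by linarith : ((t:ℕ):ℤ) + 1 ≤ (ob L.1 (t : ℕ) : ℤ))
      omega
    · intro c
      apply Subtype.ext
      funext t
      apply Fin.ext
      simp only []
      have := ob_enc (n+1) 0 (extc c.1) (extc_mono c.2.1) (Nat.zero_le _) (t : ℕ) (by omega)
      rw [extc_eq c.1 t] at this
      omega
    · intro L
      apply Subtype.ext
      simp only []
      obtain ⟨hlen, hmem, hc1, hballot⟩ := L.2
      have hcn : L.1.count (-1) = n + 1 := by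
        have := length_eq_counts L.1 hmem
        omega
      have hne : L.1 ≠ [] := by
        intro h
        rw [h] at hlen
        simp at hlen
      have hlast := last_neg L.1 hmem (by omega) hballot hne
      have hob0 : 1 ≤ ob L.1 0 := by
        have := ballot_ob L.1 0 0 hmem (by simpa using hballot) (by rw [hcn]; omega)
        exact_mod_cast (by linarith : (1:ℤ) ≤ (ob L.1 0 : ℤ))
      rw [enc_congr (n+1) 0 _ (fun t => 0 + ob L.1 t - 1) ?_]
      · exact enc_of_ob (n+1) 0 L.1 hmem hcn (Or.inr hlast) (Or.inr (Or.inr hob0))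
      · intro t ht
        rw [extc_val]
        simp only []
        have : min t n = t := by omega
        rw [this]
        omega
  exact ⟨e1.trans e2⟩

end Assembly

/-- There is a bijection between `RP_n` and the set of `±1`-sequences of length `2(n+1)`
with exactly `n+1` entries equal to `+1` (hence `n+1` equal to `-1`) all of whose
partial sums are nonnegative. -/
theorem rp_equiv_ballot_sequences (n : ℕ) :
    Nonempty ({f : PMap n // IsInj f ∧ IsOrd f ∧ IsRtop f} ≃
      {L : List ℤ // L.length = 2 * (n + 1) ∧ (∀ x ∈ L, x = 1 ∨ x = -1) ∧
        L.count 1 = n + 1 ∧ ∀ m : ℕ, 0 ≤ (L.take m).sum}) := by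
  exact rp_equiv_ballot_sequences'
end

section
/- In the Motzkin monoid M_n, the generators satisfy t_i r_{i+1} = t_i t_{i+1} l_i and l_{i+1} t_i = r_i t_{i+1} t_i for all 1 ≤ i ≤ n−2. -/
/-- Vertices of a Motzkin diagram: `Sum.inl` is the top row, `Sum.inr` the bottom row. -/
abbrev MVert (n : ℕ) := Fin n ⊕ Fin n

/-- A Motzkin-type diagram on two rows of `n` vertices, given by its edge relation. -/
abbrev MDiag (n : ℕ) := MVert n → MVert n → Prop

/-- One step between middle-row vertices when stacking `d₁` on top of `d₂`. -/
def dstep {n : ℕ} (d₁ d₂ : MDiag n) (m m' : Fin n) : Prop :=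
  d₁ (Sum.inr m) (Sum.inr m') ∨ d₂ (Sum.inl m) (Sum.inl m')

/-- Reachability through the middle row when stacking `d₁` on top of `d₂`. -/
def dreach {n : ℕ} (d₁ d₂ : MDiag n) : Fin n → Fin n → Prop :=
  Relation.ReflTransGen (dstep d₁ d₂)

/-- Diagram multiplication: stack `d₁` on top of `d₂`, identify the bottom row of `d₁`
with the top row of `d₂`, keep the induced edges, and discard closed loops (x = 1). -/
def dcomp {n : ℕ} (d₁ d₂ : MDiag n) : MDiag n := fun x y =>
  match x, y with
  | Sum.inl u, Sum.inl u' =>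
      d₁ (Sum.inl u) (Sum.inl u') ∨
        (u ≠ u' ∧ ∃ m m', d₁ (Sum.inl u) (Sum.inr m) ∧ dreach d₁ d₂ m m' ∧
          d₁ (Sum.inl u') (Sum.inr m'))
  | Sum.inl u, Sum.inr v =>
      ∃ m m', d₁ (Sum.inl u) (Sum.inr m) ∧ dreach d₁ d₂ m m' ∧ d₂ (Sum.inl m') (Sum.inr v)
  | Sum.inr v, Sum.inl u =>
      ∃ m m', d₁ (Sum.inl u) (Sum.inr m) ∧ dreach d₁ d₂ m m' ∧ d₂ (Sum.inl m') (Sum.inr v)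
  | Sum.inr v, Sum.inr v' =>
      d₂ (Sum.inr v) (Sum.inr v') ∨
        (v ≠ v' ∧ ∃ m m', d₂ (Sum.inl m) (Sum.inr v) ∧ dreach d₁ d₂ m m' ∧
          d₂ (Sum.inl m') (Sum.inr v'))

/-- The identity diagram. -/
def iddiag (n : ℕ) : MDiag n := fun x y =>
  match x, y with
  | Sum.inl a, Sum.inr b => a = b
  | Sum.inr a, Sum.inl b => a = b
  | _, _ => False

/-- The Temperley-Lieb generator `t i` (0-indexed): horizontal edges joining vertices
`i, i+1` on top and on bottom, vertical edges elsewhere. -/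
def tdiag (n i : ℕ) : MDiag n := fun x y =>
  match x, y with
  | Sum.inl a, Sum.inl b => ((a : ℕ) = i ∧ (b : ℕ) = i + 1) ∨ ((a : ℕ) = i + 1 ∧ (b : ℕ) = i)
  | Sum.inr a, Sum.inr b => ((a : ℕ) = i ∧ (b : ℕ) = i + 1) ∨ ((a : ℕ) = i + 1 ∧ (b : ℕ) = i)
  | Sum.inl a, Sum.inr b => a = b ∧ (a : ℕ) ≠ i ∧ (a : ℕ) ≠ i + 1
  | Sum.inr a, Sum.inl b => a = b ∧ (a : ℕ) ≠ i ∧ (a : ℕ) ≠ i + 1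

/-- The generator `r i` (0-indexed): an edge from top vertex `i+1` to bottom vertex `i`,
vertical edges elsewhere; top vertex `i` and bottom vertex `i+1` are empty. -/
def rdiag (n i : ℕ) : MDiag n := fun x y =>
  match x, y with
  | Sum.inl a, Sum.inr b =>
      ((a : ℕ) = i + 1 ∧ (b : ℕ) = i) ∨ (a = b ∧ (a : ℕ) ≠ i ∧ (a : ℕ) ≠ i + 1)
  | Sum.inr b, Sum.inl a =>
      ((a : ℕ) = i + 1 ∧ (b : ℕ) = i) ∨ (a = b ∧ (a : ℕ) ≠ i ∧ (a : ℕ) ≠ i + 1)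
  | _, _ => False

/-- The generator `l i` (0-indexed): an edge from top vertex `i` to bottom vertex `i+1`,
vertical edges elsewhere; top vertex `i+1` and bottom vertex `i` are empty. -/
def ldiag (n i : ℕ) : MDiag n := fun x y =>
  match x, y with
  | Sum.inl a, Sum.inr b =>
      ((a : ℕ) = i ∧ (b : ℕ) = i + 1) ∨ (a = b ∧ (a : ℕ) ≠ i ∧ (a : ℕ) ≠ i + 1)
  | Sum.inr b, Sum.inl a =>
      ((a : ℕ) = i ∧ (b : ℕ) = i + 1) ∨ (a = b ∧ (a : ℕ) ≠ i ∧ (a : ℕ) ≠ i + 1)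
  | _, _ => False

/-- The idempotent `p i = r i * l i` (0-indexed): the partial-identity diagram whose
vertex `i` on top and on bottom is empty, with vertical edges elsewhere. -/
def pdiag (n i : ℕ) : MDiag n := fun x y =>
  match x, y with
  | Sum.inl a, Sum.inr b => a = b ∧ (a : ℕ) ≠ i
  | Sum.inr a, Sum.inl b => a = b ∧ (a : ℕ) ≠ i
  | _, _ => False

/-- The product of a list of diagrams, multiplied left-to-right. -/
def dprod (n : ℕ) (L : List (MDiag n)) : MDiag n := L.foldr dcomp (iddiag n)

section MotzkinAux

open Relation

lemma reach_char {n : ℕ} {S : Fin n → Fin n → Prop} (P : Fin n → Prop)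
    (h : ∀ x y, S x y → P x ∧ P y) :
    ∀ x y, Relation.ReflTransGen S x y → x = y ∨ (P x ∧ P y) := by
  intro x y hxy
  induction hxy with
  | refl => exact Or.inl rfl
  | tail _ hstep ih =>
      rcases h _ _ hstep with ⟨h1, h2⟩
      rcases ih with rfl | ⟨p1, _⟩
      · exact Or.inr ⟨h1, h2⟩
      · exact Or.inr ⟨p1, h2⟩

/-- explicit form of `t_i r_{i+1}` and of `t_i t_{i+1} l_i`. -/
def D1diag (n i : ℕ) : MDiag n := fun x y =>
  match x, y with
  | Sum.inl a, Sum.inl b => ((a : ℕ) = i ∧ (b : ℕ) = i + 1) ∨ ((a : ℕ) = i + 1 ∧ (b : ℕ) = i)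
  | Sum.inl a, Sum.inr b =>
      ((a : ℕ) = i + 2 ∧ (b : ℕ) = i + 1) ∨
        ((a : ℕ) = (b : ℕ) ∧ (a : ℕ) ≠ i ∧ (a : ℕ) ≠ i + 1 ∧ (a : ℕ) ≠ i + 2)
  | Sum.inr b, Sum.inl a =>
      ((a : ℕ) = i + 2 ∧ (b : ℕ) = i + 1) ∨
        ((a : ℕ) = (b : ℕ) ∧ (a : ℕ) ≠ i ∧ (a : ℕ) ≠ i + 1 ∧ (a : ℕ) ≠ i + 2)
  | Sum.inr _, Sum.inr _ => False

lemma L1 {n i : ℕ} (hn : i + 2 < n) :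
    dcomp (tdiag n i) (rdiag n (i + 1)) = D1diag n i := by
  have hstep : ∀ m m' : Fin n, dstep (tdiag n i) (rdiag n (i + 1)) m m' →
      ((m : ℕ) = i ∨ (m : ℕ) = i + 1) ∧ ((m' : ℕ) = i ∨ (m' : ℕ) = i + 1) := by
    rintro m m' (h | h) <;> simp [tdiag, rdiag] at h <;> omega
  funext x y
  rcases x with u | u <;> rcases y with v | v <;> apply propext <;>
    simp only [dcomp, D1diag, tdiag, rdiag, dreach, Fin.ext_iff, ne_eq]
  · constructor
    · rintro (h | ⟨hne, m, m', h1, h2, h3⟩)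
      · exact h
      · rcases reach_char _ hstep _ _ h2 with rfl | ⟨hm, hm'⟩ <;> omega
    · exact Or.inl
  · constructor
    · rintro ⟨m, m', h1, h2, h3⟩
      rcases reach_char _ hstep _ _ h2 with rfl | ⟨hm, hm'⟩ <;> omega
    · rintro (⟨h1, h2⟩ | ⟨h1, h2, h3, h4⟩)
      · exact ⟨u, u, ⟨rfl, by omega, by omega⟩, Relation.ReflTransGen.refl,
          Or.inl ⟨by omega, by omega⟩⟩
      · exact ⟨u, u, ⟨rfl, h2, h3⟩, Relation.ReflTransGen.refl,
          Or.inr ⟨h1, by omega, by omega⟩⟩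
  · constructor
    · rintro ⟨m, m', h1, h2, h3⟩
      rcases reach_char _ hstep _ _ h2 with rfl | ⟨hm, hm'⟩ <;> omega
    · rintro (⟨h1, h2⟩ | ⟨h1, h2, h3, h4⟩)
      · exact ⟨v, v, ⟨rfl, by omega, by omega⟩, Relation.ReflTransGen.refl,
          Or.inl ⟨by omega, by omega⟩⟩
      · exact ⟨v, v, ⟨rfl, by omega, by omega⟩, Relation.ReflTransGen.refl,
          Or.inr ⟨h1, by omega, by omega⟩⟩
  · constructor
    · rintro (h | ⟨hne, m, m', h1, h2, h3⟩)
      · exact h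
      · rcases reach_char _ hstep _ _ h2 with rfl | ⟨hm, hm'⟩ <;> omega
    · exact False.elim


/-- explicit form of `t_i t_{i+1}`. -/
def Adiag (n i : ℕ) : MDiag n := fun x y =>
  match x, y with
  | Sum.inl a, Sum.inl b => ((a : ℕ) = i ∧ (b : ℕ) = i + 1) ∨ ((a : ℕ) = i + 1 ∧ (b : ℕ) = i)
  | Sum.inl a, Sum.inr b =>
      ((a : ℕ) = i + 2 ∧ (b : ℕ) = i) ∨
        ((a : ℕ) = (b : ℕ) ∧ (a : ℕ) ≠ i ∧ (a : ℕ) ≠ i + 1 ∧ (a : ℕ) ≠ i + 2)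
  | Sum.inr b, Sum.inl a =>
      ((a : ℕ) = i + 2 ∧ (b : ℕ) = i) ∨
        ((a : ℕ) = (b : ℕ) ∧ (a : ℕ) ≠ i ∧ (a : ℕ) ≠ i + 1 ∧ (a : ℕ) ≠ i + 2)
  | Sum.inr a, Sum.inr b =>
      ((a : ℕ) = i + 1 ∧ (b : ℕ) = i + 2) ∨ ((a : ℕ) = i + 2 ∧ (b : ℕ) = i + 1)

lemma L2 {n i : ℕ} (hn : i + 2 < n) :
    dcomp (tdiag n i) (tdiag n (i + 1)) = Adiag n i := by
  have hstep : ∀ m m' : Fin n, dstep (tdiag n i) (tdiag n (i + 1)) m m' →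
      ((m : ℕ) = i ∨ (m : ℕ) = i + 1 ∨ (m : ℕ) = i + 2) ∧
      ((m' : ℕ) = i ∨ (m' : ℕ) = i + 1 ∨ (m' : ℕ) = i + 2) := by
    rintro m m' (h | h) <;> simp [tdiag] at h <;> omega
  funext x y
  rcases x with u | u <;> rcases y with v | v <;> apply propext <;>
    simp only [dcomp, Adiag, tdiag, dreach, Fin.ext_iff, ne_eq]
  · constructor
    · rintro (h | ⟨hne, m, m', h1, h2, h3⟩)
      · exact h
      · rcases reach_char _ hstep _ _ h2 with rfl | ⟨hm, hm'⟩ <;> omega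
    · exact Or.inl
  · constructor
    · rintro ⟨m, m', h1, h2, h3⟩
      rcases reach_char _ hstep _ _ h2 with rfl | ⟨hm, hm'⟩ <;> omega
    · rintro (⟨h1, h2⟩ | ⟨h1, h2, h3, h4⟩)
      · refine ⟨u, v, ⟨rfl, by omega, by omega⟩, ?_, ⟨rfl, by omega, by omega⟩⟩
        exact Relation.ReflTransGen.head (b := (⟨i + 1, by omega⟩ : Fin n))
          (Or.inr (Or.inr ⟨h1, rfl⟩))
          (Relation.ReflTransGen.single (Or.inl (Or.inr ⟨rfl, h2⟩)))
      · exact ⟨u, u, ⟨rfl, h2, h3⟩, Relation.ReflTransGen.refl, ⟨h1, by omega, by omega⟩⟩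
  · constructor
    · rintro ⟨m, m', h1, h2, h3⟩
      rcases reach_char _ hstep _ _ h2 with rfl | ⟨hm, hm'⟩ <;> omega
    · rintro (⟨h1, h2⟩ | ⟨h1, h2, h3, h4⟩)
      · refine ⟨v, u, ⟨rfl, by omega, by omega⟩, ?_, ⟨rfl, by omega, by omega⟩⟩
        exact Relation.ReflTransGen.head (b := (⟨i + 1, by omega⟩ : Fin n))
          (Or.inr (Or.inr ⟨h1, rfl⟩))
          (Relation.ReflTransGen.single (Or.inl (Or.inr ⟨rfl, h2⟩)))
      · exact ⟨v, v, ⟨rfl, by omega, by omega⟩, Relation.ReflTransGen.refl,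
          ⟨h1, by omega, by omega⟩⟩
  · constructor
    · rintro (h | ⟨hne, m, m', h1, h2, h3⟩)
      · exact h
      · rcases reach_char _ hstep _ _ h2 with rfl | ⟨hm, hm'⟩ <;> omega
    · exact Or.inl

lemma L3 {n i : ℕ} (hn : i + 2 < n) :
    dcomp (Adiag n i) (ldiag n i) = D1diag n i := by
  have hstep : ∀ m m' : Fin n, dstep (Adiag n i) (ldiag n i) m m' →
      ((m : ℕ) = i + 1 ∨ (m : ℕ) = i + 2) ∧ ((m' : ℕ) = i + 1 ∨ (m' : ℕ) = i + 2) := by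
    rintro m m' (h | h) <;> simp [Adiag, ldiag] at h <;> omega
  funext x y
  rcases x with u | u <;> rcases y with v | v <;> apply propext <;>
    simp only [dcomp, Adiag, ldiag, D1diag, dreach, Fin.ext_iff, ne_eq]
  · constructor
    · rintro (h | ⟨hne, m, m', h1, h2, h3⟩)
      · exact h
      · rcases reach_char _ hstep _ _ h2 with rfl | ⟨hm, hm'⟩ <;> omega
    · exact Or.inl
  · constructor
    · rintro ⟨m, m', h1, h2, h3⟩
      rcases reach_char _ hstep _ _ h2 with rfl | ⟨hm, hm'⟩ <;> omega
    · rintro (⟨h1, h2⟩ | ⟨h1, h2, h3, h4⟩)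
      · exact ⟨⟨i, by omega⟩, ⟨i, by omega⟩, Or.inl ⟨h1, rfl⟩,
          Relation.ReflTransGen.refl, Or.inl ⟨rfl, h2⟩⟩
      · exact ⟨u, u, Or.inr ⟨rfl, h2, h3, h4⟩, Relation.ReflTransGen.refl,
          Or.inr ⟨h1, h2, h3⟩⟩
  · constructor
    · rintro ⟨m, m', h1, h2, h3⟩
      rcases reach_char _ hstep _ _ h2 with rfl | ⟨hm, hm'⟩ <;> omega
    · rintro (⟨h1, h2⟩ | ⟨h1, h2, h3, h4⟩)
      · exact ⟨⟨i, by omega⟩, ⟨i, by omega⟩, Or.inl ⟨h1, rfl⟩,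
          Relation.ReflTransGen.refl, Or.inl ⟨rfl, h2⟩⟩
      · exact ⟨v, v, Or.inr ⟨rfl, h2, h3, h4⟩, Relation.ReflTransGen.refl,
          Or.inr ⟨h1, h2, h3⟩⟩
  · constructor
    · rintro (h | ⟨hne, m, m', h1, h2, h3⟩)
      · exact h
      · rcases reach_char _ hstep _ _ h2 with rfl | ⟨hm, hm'⟩ <;> omega
    · exact False.elim
/-- explicit form of `l_{i+1} t_i` and of `r_i t_{i+1} t_i`. -/
def D2diag (n i : ℕ) : MDiag n := fun x y =>
  match x, y with
  | Sum.inl _, Sum.inl _ => False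
  | Sum.inl a, Sum.inr b =>
      ((a : ℕ) = i + 1 ∧ (b : ℕ) = i + 2) ∨
        ((a : ℕ) = (b : ℕ) ∧ (a : ℕ) ≠ i ∧ (a : ℕ) ≠ i + 1 ∧ (a : ℕ) ≠ i + 2)
  | Sum.inr b, Sum.inl a =>
      ((a : ℕ) = i + 1 ∧ (b : ℕ) = i + 2) ∨
        ((a : ℕ) = (b : ℕ) ∧ (a : ℕ) ≠ i ∧ (a : ℕ) ≠ i + 1 ∧ (a : ℕ) ≠ i + 2)
  | Sum.inr a, Sum.inr b => ((a : ℕ) = i ∧ (b : ℕ) = i + 1) ∨ ((a : ℕ) = i + 1 ∧ (b : ℕ) = i)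

/-- explicit form of `r_i t_{i+1}`. -/
def Bdiag (n i : ℕ) : MDiag n := fun x y =>
  match x, y with
  | Sum.inl _, Sum.inl _ => False
  | Sum.inl a, Sum.inr b =>
      ((a : ℕ) = i + 1 ∧ (b : ℕ) = i) ∨
        ((a : ℕ) = (b : ℕ) ∧ (a : ℕ) ≠ i ∧ (a : ℕ) ≠ i + 1 ∧ (a : ℕ) ≠ i + 2)
  | Sum.inr b, Sum.inl a =>
      ((a : ℕ) = i + 1 ∧ (b : ℕ) = i) ∨
        ((a : ℕ) = (b : ℕ) ∧ (a : ℕ) ≠ i ∧ (a : ℕ) ≠ i + 1 ∧ (a : ℕ) ≠ i + 2)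
  | Sum.inr a, Sum.inr b =>
      ((a : ℕ) = i + 1 ∧ (b : ℕ) = i + 2) ∨ ((a : ℕ) = i + 2 ∧ (b : ℕ) = i + 1)

lemma L4 {n i : ℕ} (hn : i + 2 < n) :
    dcomp (ldiag n (i + 1)) (tdiag n i) = D2diag n i := by
  have hstep : ∀ m m' : Fin n, dstep (ldiag n (i + 1)) (tdiag n i) m m' →
      ((m : ℕ) = i ∨ (m : ℕ) = i + 1) ∧ ((m' : ℕ) = i ∨ (m' : ℕ) = i + 1) := by
    rintro m m' (h | h) <;> simp [tdiag, ldiag] at h <;> omega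
  funext x y
  rcases x with u | u <;> rcases y with v | v <;> apply propext <;>
    simp only [dcomp, ldiag, tdiag, D2diag, dreach, Fin.ext_iff, ne_eq]
  · constructor
    · rintro (h | ⟨hne, m, m', h1, h2, h3⟩)
      · exact h
      · rcases reach_char _ hstep _ _ h2 with rfl | ⟨hm, hm'⟩ <;> omega
    · exact False.elim
  · constructor
    · rintro ⟨m, m', h1, h2, h3⟩
      rcases reach_char _ hstep _ _ h2 with rfl | ⟨hm, hm'⟩ <;> omega
    · rintro (⟨h1, h2⟩ | ⟨h1, h2, h3, h4⟩)
      · exact ⟨⟨i + 2, by omega⟩, ⟨i + 2, by omega⟩, Or.inl ⟨h1, rfl⟩,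
          Relation.ReflTransGen.refl,
          ⟨h2.symm, (by omega : ¬(i+2:ℕ) = i), (by omega : ¬(i+2:ℕ) = i+1)⟩⟩
      · exact ⟨u, u, Or.inr ⟨rfl, h3, h4⟩, Relation.ReflTransGen.refl, ⟨h1, h2, h3⟩⟩
  · constructor
    · rintro ⟨m, m', h1, h2, h3⟩
      rcases reach_char _ hstep _ _ h2 with rfl | ⟨hm, hm'⟩ <;> omega
    · rintro (⟨h1, h2⟩ | ⟨h1, h2, h3, h4⟩)
      · exact ⟨⟨i + 2, by omega⟩, ⟨i + 2, by omega⟩, Or.inl ⟨h1, rfl⟩,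
          Relation.ReflTransGen.refl,
          ⟨h2.symm, (by omega : ¬(i+2:ℕ) = i), (by omega : ¬(i+2:ℕ) = i+1)⟩⟩
      · exact ⟨v, v, Or.inr ⟨rfl, h3, h4⟩, Relation.ReflTransGen.refl, ⟨h1, h2, h3⟩⟩
  · constructor
    · rintro (h | ⟨hne, m, m', h1, h2, h3⟩)
      · exact h
      · rcases reach_char _ hstep _ _ h2 with rfl | ⟨hm, hm'⟩ <;> omega
    · exact Or.inl

lemma L5 {n i : ℕ} (hn : i + 2 < n) :
    dcomp (rdiag n i) (tdiag n (i + 1)) = Bdiag n i := by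
  have hstep : ∀ m m' : Fin n, dstep (rdiag n i) (tdiag n (i + 1)) m m' →
      ((m : ℕ) = i + 1 ∨ (m : ℕ) = i + 2) ∧ ((m' : ℕ) = i + 1 ∨ (m' : ℕ) = i + 2) := by
    rintro m m' (h | h) <;> simp [tdiag, rdiag] at h <;> omega
  funext x y
  rcases x with u | u <;> rcases y with v | v <;> apply propext <;>
    simp only [dcomp, rdiag, tdiag, Bdiag, dreach, Fin.ext_iff, ne_eq]
  · constructor
    · rintro (h | ⟨hne, m, m', h1, h2, h3⟩)
      · exact h
      · rcases reach_char _ hstep _ _ h2 with rfl | ⟨hm, hm'⟩ <;> omega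
    · exact False.elim
  · constructor
    · rintro ⟨m, m', h1, h2, h3⟩
      rcases reach_char _ hstep _ _ h2 with rfl | ⟨hm, hm'⟩ <;> omega
    · rintro (⟨h1, h2⟩ | ⟨h1, h2, h3, h4⟩)
      · exact ⟨⟨i, by omega⟩, ⟨i, by omega⟩, Or.inl ⟨h1, rfl⟩,
          Relation.ReflTransGen.refl,
          ⟨h2.symm, (by omega : ¬(i:ℕ) = i+1), (by omega : ¬(i:ℕ) = i+1+1)⟩⟩
      · exact ⟨u, u, Or.inr ⟨rfl, h2, h3⟩, Relation.ReflTransGen.refl, ⟨h1, h3, h4⟩⟩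
  · constructor
    · rintro ⟨m, m', h1, h2, h3⟩
      rcases reach_char _ hstep _ _ h2 with rfl | ⟨hm, hm'⟩ <;> omega
    · rintro (⟨h1, h2⟩ | ⟨h1, h2, h3, h4⟩)
      · exact ⟨⟨i, by omega⟩, ⟨i, by omega⟩, Or.inl ⟨h1, rfl⟩,
          Relation.ReflTransGen.refl,
          ⟨h2.symm, (by omega : ¬(i:ℕ) = i+1), (by omega : ¬(i:ℕ) = i+1+1)⟩⟩
      · exact ⟨v, v, Or.inr ⟨rfl, h2, h3⟩, Relation.ReflTransGen.refl, ⟨h1, h3, h4⟩⟩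
  · constructor
    · rintro (h | ⟨hne, m, m', h1, h2, h3⟩)
      · exact h
      · rcases reach_char _ hstep _ _ h2 with rfl | ⟨hm, hm'⟩ <;> omega
    · exact Or.inl

lemma L6 {n i : ℕ} (hn : i + 2 < n) :
    dcomp (Bdiag n i) (tdiag n i) = D2diag n i := by
  have hstep : ∀ m m' : Fin n, dstep (Bdiag n i) (tdiag n i) m m' →
      ((m : ℕ) = i ∨ (m : ℕ) = i + 1 ∨ (m : ℕ) = i + 2) ∧
      ((m' : ℕ) = i ∨ (m' : ℕ) = i + 1 ∨ (m' : ℕ) = i + 2) := by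
    rintro m m' (h | h) <;> simp [tdiag, Bdiag] at h <;> omega
  funext x y
  rcases x with u | u <;> rcases y with v | v <;> apply propext <;>
    simp only [dcomp, Bdiag, tdiag, D2diag, dreach, Fin.ext_iff, ne_eq]
  · constructor
    · rintro (h | ⟨hne, m, m', h1, h2, h3⟩)
      · exact h
      · rcases reach_char _ hstep _ _ h2 with rfl | ⟨hm, hm'⟩ <;> omega
    · exact False.elim
  · constructor
    · rintro ⟨m, m', h1, h2, h3⟩
      rcases reach_char _ hstep _ _ h2 with rfl | ⟨hm, hm'⟩ <;> omega
    · rintro (⟨h1, h2⟩ | ⟨h1, h2, h3, h4⟩)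
      · refine ⟨⟨i, by omega⟩, ⟨i + 2, by omega⟩, Or.inl ⟨h1, rfl⟩, ?_,
          ⟨h2.symm, (by omega : ¬(i+2:ℕ) = i), (by omega : ¬(i+2:ℕ) = i+1)⟩⟩
        exact Relation.ReflTransGen.head (b := (⟨i + 1, by omega⟩ : Fin n))
          (Or.inr (Or.inl ⟨rfl, rfl⟩))
          (Relation.ReflTransGen.single (Or.inl (Or.inl ⟨rfl, rfl⟩)))
      · exact ⟨u, u, Or.inr ⟨rfl, h2, h3, h4⟩, Relation.ReflTransGen.refl, ⟨h1, h2, h3⟩⟩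
  · constructor
    · rintro ⟨m, m', h1, h2, h3⟩
      rcases reach_char _ hstep _ _ h2 with rfl | ⟨hm, hm'⟩ <;> omega
    · rintro (⟨h1, h2⟩ | ⟨h1, h2, h3, h4⟩)
      · refine ⟨⟨i, by omega⟩, ⟨i + 2, by omega⟩, Or.inl ⟨h1, rfl⟩, ?_,
          ⟨h2.symm, (by omega : ¬(i+2:ℕ) = i), (by omega : ¬(i+2:ℕ) = i+1)⟩⟩
        exact Relation.ReflTransGen.head (b := (⟨i + 1, by omega⟩ : Fin n))
          (Or.inr (Or.inl ⟨rfl, rfl⟩))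
          (Relation.ReflTransGen.single (Or.inl (Or.inl ⟨rfl, rfl⟩)))
      · exact ⟨v, v, Or.inr ⟨rfl, h2, h3, h4⟩, Relation.ReflTransGen.refl, ⟨h1, h2, h3⟩⟩
  · constructor
    · rintro (h | ⟨hne, m, m', h1, h2, h3⟩)
      · exact h
      · rcases reach_char _ hstep _ _ h2 with rfl | ⟨hm, hm'⟩ <;> omega
    · exact Or.inl
end MotzkinAux

/-- In the Motzkin monoid `M_n`, `t_i r_{i+1} = t_i t_{i+1} l_i` and
`l_{i+1} t_i = r_i t_{i+1} t_i` (0-indexed). -/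
theorem motzkin_tr_relations (n : ℕ) :
    ∀ i : ℕ, i + 2 < n →
      dcomp (tdiag n i) (rdiag n (i + 1)) =
        dcomp (dcomp (tdiag n i) (tdiag n (i + 1))) (ldiag n i) ∧
      dcomp (ldiag n (i + 1)) (tdiag n i) =
        dcomp (dcomp (rdiag n i) (tdiag n (i + 1))) (tdiag n i) := by
  intro i hi
  exact ⟨by rw [L1 hi, L2 hi, L3 hi], by rw [L4 hi, L5 hi, L6 hi]⟩
end

section
/- (Hop lemma) In the Motzkin monoid M_n, for natural numbers i < k with k − i even: (t_{k−1} t_{k−3} ··· t_{i+1}) p_i = (t_{k−1} t_{k−3} ··· t_{i+1})(t_{k−2} t_{k−4} ··· t_i)(l_{k−1} l_{k−2} ··· l_i). -/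
section MotzkinHopAux

def cupRel (c m a b : ℕ) : Prop :=
  (c ≤ a ∧ a < c + 2*m ∧ b = a + 1 ∧ a % 2 = c % 2) ∨
  (c ≤ b ∧ b < c + 2*m ∧ a = b + 1 ∧ b % 2 = c % 2)

def cupC (n c m : ℕ) : MDiag n := fun x y =>
  match x, y with
  | Sum.inl a, Sum.inl b => cupRel c m a.val b.val
  | Sum.inr a, Sum.inr b => cupRel c m a.val b.val
  | Sum.inl a, Sum.inr b => a.val = b.val ∧ (a.val < c ∨ c + 2*m ≤ a.val)
  | Sum.inr a, Sum.inl b => a.val = b.val ∧ (a.val < c ∨ c + 2*m ≤ a.val)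

def sh (c M a b : ℕ) : Prop :=
  (c ≤ a ∧ a < c + M ∧ b = a + 1) ∨ (a = b ∧ (a < c ∨ c + M < a))

def shiftD (n c M : ℕ) : MDiag n := fun x y =>
  match x, y with
  | Sum.inl a, Sum.inr b => sh c M a.val b.val
  | Sum.inr b, Sum.inl a => sh c M a.val b.val
  | _, _ => False

def hopD (n i m : ℕ) : MDiag n := fun x y =>
  match x, y with
  | Sum.inl a, Sum.inl b => cupRel (i+1) m a.val b.val
  | Sum.inr a, Sum.inr b => cupRel i m a.val b.val
  | Sum.inl a, Sum.inr b =>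
      (a.val = i ∧ b.val = i + 2*m) ∨ (a.val = b.val ∧ (a.val < i ∨ i + 2*m < a.val))
  | Sum.inr b, Sum.inl a =>
      (a.val = i ∧ b.val = i + 2*m) ∨ (a.val = b.val ∧ (a.val < i ∨ i + 2*m < a.val))

def dD (n i m : ℕ) : MDiag n := fun x y =>
  match x, y with
  | Sum.inl a, Sum.inl b => cupRel (i+1) m a.val b.val
  | Sum.inr a, Sum.inr b => cupRel (i+1) m a.val b.val
  | Sum.inl a, Sum.inr b => a.val = b.val ∧ (a.val < i ∨ i + 2*m < a.val)
  | Sum.inr a, Sum.inl b => a.val = b.val ∧ (a.val < i ∨ i + 2*m < a.val)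

lemma reach_of_matching {n : ℕ} {d₁ d₂ : MDiag n}
    (hsym : ∀ a b, dstep d₁ d₂ a b → dstep d₁ d₂ b a)
    (hfun : ∀ a b c, dstep d₁ d₂ a b → dstep d₁ d₂ a c → b = c) :
    ∀ a b : Fin n, dreach d₁ d₂ a b ↔ (a = b ∨ dstep d₁ d₂ a b) := by
  intro a b
  constructor
  · intro h
    induction h using Relation.ReflTransGen.head_induction_on with
    | refl => exact Or.inl rfl
    | head hac _ ih =>
      rcases ih with rfl | hcb
      · exact Or.inr hac
      · exact Or.inl (hfun _ _ _ (hsym _ _ hac) hcb)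
  · rintro (rfl | h)
    · exact Relation.ReflTransGen.refl
    · exact Relation.ReflTransGen.single h

-- test match reduction
example (n c m : ℕ) (a b : Fin n) : cupC n c m (Sum.inl a) (Sum.inr b) ↔ (a.val = b.val ∧ (a.val < c ∨ c + 2*m ≤ a.val)) := by
  simp only [cupC]


lemma tstep (n c m : ℕ) (hn : c + 2*m + 1 < n) :
    dcomp (tdiag n (c + 2*m)) (cupC n c m) = cupC n c (m+1) := by
  have hstep : ∀ a b : Fin n, dstep (tdiag n (c + 2*m)) (cupC n c m) a b ↔
      ((((a:ℕ) = c+2*m ∧ (b:ℕ) = c+2*m+1) ∨ ((a:ℕ) = c+2*m+1 ∧ (b:ℕ) = c+2*m)) ∨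
        cupRel c m a.val b.val) := by
    intro a b; simp only [dstep, tdiag, cupC]
  have hreach : ∀ a b : Fin n, dreach (tdiag n (c + 2*m)) (cupC n c m) a b ↔
      (a = b ∨ dstep (tdiag n (c + 2*m)) (cupC n c m) a b) := by
    apply reach_of_matching
    · intro a b h; rw [hstep] at *; unfold cupRel at *; omega
    · intro a b c' h1 h2; rw [hstep] at h1 h2
      apply Fin.ext; unfold cupRel at h1 h2; omega
  funext x y
  rcases x with a | a <;> rcases y with b | b <;> apply propext
  · -- inl inl
    simp only [dcomp, tdiag, cupC]
    constructor
    · rintro (h | ⟨hab, m₁, m₂, h1, hr, h2⟩)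
      · unfold cupRel; omega
      · rw [hreach, hstep] at hr
        simp only [cupRel, ne_eq, Fin.ext_iff] at hab hr h1 h2 ⊢; omega
    · intro h
      by_cases hcase : a.val < c + 2*m ∧ b.val < c + 2*m
      · right
        refine ⟨by simp only [ne_eq, Fin.ext_iff]; unfold cupRel at h; omega, a, b,
          ⟨rfl, by unfold cupRel at h; omega⟩,
          (hreach a b).2 (Or.inr ((hstep a b).2 (Or.inr (by unfold cupRel at h ⊢; omega)))),
          ⟨rfl, by unfold cupRel at h; omega⟩⟩
      · left; unfold cupRel at h; omega
  · -- inl inr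
    simp only [dcomp, tdiag, cupC]
    constructor
    · rintro ⟨m₁, m₂, h1, hr, h2⟩
      rw [hreach, hstep] at hr
      simp only [cupRel, ne_eq, Fin.ext_iff] at hr h1 h2 ⊢; omega
    · rintro ⟨hab, hv⟩
      refine ⟨a, b, ⟨rfl, by omega⟩, (hreach a b).2 (Or.inl (Fin.ext hab)), rfl, by omega⟩
  · -- inr inl
    simp only [dcomp, tdiag, cupC]
    constructor
    · rintro ⟨m₁, m₂, h1, hr, h2⟩
      rw [hreach, hstep] at hr
      simp only [cupRel, ne_eq, Fin.ext_iff] at hr h1 h2 ⊢; omega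
    · rintro ⟨hab, hv⟩
      refine ⟨b, a, ⟨rfl, by omega⟩, (hreach b a).2 (Or.inl (Fin.ext hab.symm)), rfl, by omega⟩
  · -- inr inr
    simp only [dcomp, tdiag, cupC]
    constructor
    · rintro (h | ⟨hab, m₁, m₂, h1, hr, h2⟩)
      · unfold cupRel at *; omega
      · rw [hreach, hstep] at hr
        simp only [cupRel, ne_eq, Fin.ext_iff] at hab hr h1 h2 ⊢; omega
    · intro h
      by_cases hcase : a.val < c + 2*m ∧ b.val < c + 2*m
      · left; unfold cupRel at *; omega
      · right
        have ha : a.val = c+2*m ∧ b.val = c+2*m+1 ∨ a.val = c+2*m+1 ∧ b.val = c+2*m := by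
          unfold cupRel at h; omega
        refine ⟨by simp only [ne_eq, Fin.ext_iff]; omega, a, b, ⟨rfl, by omega⟩,
          (hreach a b).2 (Or.inr ((hstep a b).2 (Or.inl (by omega)))), rfl, by omega⟩


lemma cupC_zero (n c : ℕ) : cupC n c 0 = iddiag n := by
  funext x y
  rcases x with a | a <;> rcases y with b | b <;> apply propext <;>
    simp only [cupC, iddiag, cupRel, Fin.ext_iff, iff_false] <;> omega

lemma dprod_cons (n : ℕ) (d : MDiag n) (L : List (MDiag n)) :
    dprod n (d :: L) = dcomp d (dprod n L) := rfl

lemma mh_tprod (n c : ℕ) : ∀ m : ℕ, c + 2*m ≤ n →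
    dprod n ((List.range m).map (fun j => tdiag n (c + 2*(m-1-j)))) = cupC n c m := by
  intro m
  induction m with
  | zero => intro _; simp only [List.range_zero, List.map_nil, dprod, List.foldr_nil, cupC_zero]
  | succ m ih =>
    intro h
    have hf : ((fun j => tdiag n (c + 2*(m+1-1-j))) ∘ Nat.succ) =
        (fun j => tdiag n (c + 2*(m-1-j))) := by
      funext j
      have h1 : m+1-1-(j+1) = m-1-j := by omega
      simp only [Function.comp_apply, h1]
    have h0 : m+1-1-0 = m := by omega
    rw [List.range_succ_eq_map, List.map_cons, List.map_map, hf, h0, dprod_cons,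
      ih (by omega), tstep n c m (by omega)]


lemma lbase (n c : ℕ) : dcomp (ldiag n c) (iddiag n) = shiftD n c 1 := by
  have hreach : ∀ a b : Fin n, dreach (ldiag n c) (iddiag n) a b ↔ (a = b ∨ dstep (ldiag n c) (iddiag n) a b) := by
    apply reach_of_matching
    · intro a b h; simp only [dstep, ldiag, iddiag] at *; exact h
    · intro a b c' h1 _; simp only [dstep, ldiag, iddiag, or_self] at h1
  have hfalse : ∀ a b : Fin n, dstep (ldiag n c) (iddiag n) a b ↔ False := by
    intro a b; simp only [dstep, ldiag, iddiag, or_self]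
  funext x y
  rcases x with a | a <;> rcases y with b | b <;> apply propext
  · simp only [dcomp, ldiag, shiftD, iddiag, false_or, iff_false]
    rintro ⟨hab, m₁, m₂, h1, hr, h2⟩
    rw [hreach, hfalse, or_false] at hr
    subst hr
    simp only [ne_eq, Fin.ext_iff] at hab h1 h2; omega
  · simp only [dcomp, ldiag, shiftD, iddiag]
    constructor
    · rintro ⟨m₁, m₂, h1, hr, h2⟩
      rw [hreach, hfalse, or_false] at hr
      subst hr; subst h2
      simp only [Fin.ext_iff] at h1
      unfold sh; omega
    · intro h
      refine ⟨b, b, ?_, Relation.ReflTransGen.refl, by simp only [iddiag]⟩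
      simp only [Fin.ext_iff]; unfold sh at h; omega
  · simp only [dcomp, ldiag, shiftD, iddiag]
    constructor
    · rintro ⟨m₁, m₂, h1, hr, h2⟩
      rw [hreach, hfalse, or_false] at hr
      subst hr; subst h2
      simp only [Fin.ext_iff] at h1
      unfold sh; omega
    · intro h
      refine ⟨a, a, ?_, Relation.ReflTransGen.refl, by simp only [iddiag]⟩
      simp only [Fin.ext_iff]; unfold sh at h; omega
  · simp only [dcomp, ldiag, shiftD, iddiag, false_or, iff_false]
    rintro ⟨hab, m₁, m₂, h1, hr, h2⟩
    rw [hreach, hfalse, or_false] at hr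
    subst hr; subst h1; subst h2
    exact hab rfl

lemma lstep (n c M : ℕ) (hn : c + M + 1 < n) :
    dcomp (ldiag n (c + M)) (shiftD n c M) = shiftD n c (M+1) := by
  have hreach : ∀ a b : Fin n, dreach (ldiag n (c+M)) (shiftD n c M) a b ↔
      (a = b ∨ dstep (ldiag n (c+M)) (shiftD n c M) a b) := by
    apply reach_of_matching
    · intro a b h; simp only [dstep, ldiag, shiftD] at *; exact h
    · intro a b c' h1 _; simp only [dstep, ldiag, shiftD, or_self] at h1
  have hfalse : ∀ a b : Fin n, dstep (ldiag n (c+M)) (shiftD n c M) a b ↔ False := by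
    intro a b; simp only [dstep, ldiag, shiftD, or_self]
  funext x y
  rcases x with a | a <;> rcases y with b | b <;> apply propext
  · simp only [dcomp, ldiag, shiftD, false_or, iff_false]
    rintro ⟨hab, m₁, m₂, h1, hr, h2⟩
    rw [hreach, hfalse, or_false] at hr
    subst hr
    simp only [ne_eq, Fin.ext_iff] at hab h1 h2; omega
  · simp only [dcomp, ldiag, shiftD]
    constructor
    · rintro ⟨m₁, m₂, h1, hr, h2⟩
      rw [hreach, hfalse, or_false] at hr
      subst hr
      simp only [Fin.ext_iff] at h1
      unfold sh at h2 ⊢; omega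
    · intro h
      by_cases ha : a.val = c + M
      · refine ⟨⟨c+M+1, hn⟩, ⟨c+M+1, hn⟩, Or.inl (by simp [ha]),
          Relation.ReflTransGen.refl, ?_⟩
        unfold sh at h ⊢; simp only; omega
      · refine ⟨a, a, Or.inr ⟨rfl, ?_⟩, Relation.ReflTransGen.refl, ?_⟩
        · unfold sh at h; omega
        · unfold sh at h ⊢; omega
  · simp only [dcomp, ldiag, shiftD]
    constructor
    · rintro ⟨m₁, m₂, h1, hr, h2⟩
      rw [hreach, hfalse, or_false] at hr
      subst hr
      simp only [Fin.ext_iff] at h1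
      unfold sh at h2 ⊢; omega
    · intro h
      by_cases hb : b.val = c + M
      · refine ⟨⟨c+M+1, hn⟩, ⟨c+M+1, hn⟩, Or.inl (by simp [hb]),
          Relation.ReflTransGen.refl, ?_⟩
        unfold sh at h ⊢; simp only; omega
      · refine ⟨b, b, Or.inr ⟨rfl, ?_⟩, Relation.ReflTransGen.refl, ?_⟩
        · unfold sh at h; omega
        · unfold sh at h ⊢; omega
  · simp only [dcomp, ldiag, shiftD, false_or, iff_false]
    rintro ⟨hab, m₁, m₂, h1, hr, h2⟩
    rw [hreach, hfalse, or_false] at hr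
    subst hr
    simp only [ne_eq, Fin.ext_iff] at hab h1 h2
    unfold sh at h1 h2; omega

lemma lprod (n c : ℕ) : ∀ M : ℕ, 1 ≤ M → c + M < n →
    dprod n ((List.range M).map (fun j => ldiag n (c + (M-1-j)))) = shiftD n c M := by
  intro M
  induction M with
  | zero => omega
  | succ M ih =>
    intro _ h
    rcases Nat.eq_zero_or_pos M with rfl | hM
    · have h1 : (List.range 1).map (fun j => ldiag n (c + (1-1-j))) = [ldiag n c] := by
        simp
      rw [h1, dprod_cons]
      have h2 : dprod n [] = iddiag n := rfl
      rw [h2, lbase]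
    · have hf : ((fun j => ldiag n (c + (M+1-1-j))) ∘ Nat.succ) =
          (fun j => ldiag n (c + (M-1-j))) := by
        funext j
        have h1 : M+1-1-(j+1) = M-1-j := by omega
        simp only [Function.comp_apply, h1]
      have h0 : M+1-1-0 = M := by omega
      rw [List.range_succ_eq_map, List.map_cons, List.map_map, hf, h0, dprod_cons,
        ih hM (by omega), lstep n c M (by omega)]


lemma chain_reach (n i m : ℕ) (hn : i + 2*m < n) :
    ∀ a b : Fin n, dreach (cupC n (i+1) m) (cupC n i m) a b ↔
      (a = b ∨ (i ≤ a.val ∧ a.val ≤ i + 2*m ∧ i ≤ b.val ∧ b.val ≤ i + 2*m)) := by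
  have hsteq : ∀ a b : Fin n, dstep (cupC n (i+1) m) (cupC n i m) a b ↔
      (cupRel (i+1) m a.val b.val ∨ cupRel i m a.val b.val) := by
    intro a b; simp only [dstep, cupC]
  have hrange : ∀ a b : Fin n, dstep (cupC n (i+1) m) (cupC n i m) a b →
      (i ≤ a.val ∧ a.val ≤ i + 2*m ∧ i ≤ b.val ∧ b.val ≤ i + 2*m) := by
    intro a b h; rw [hsteq] at h; unfold cupRel at h; omega
  have hcons : ∀ a b : Fin n, i ≤ a.val → b.val = a.val + 1 → b.val ≤ i + 2*m →
      dstep (cupC n (i+1) m) (cupC n i m) a b := by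
    intro a b h1 h2 h3; rw [hsteq]; unfold cupRel; omega
  have hsym : ∀ a b : Fin n, dstep (cupC n (i+1) m) (cupC n i m) a b →
      dstep (cupC n (i+1) m) (cupC n i m) b a := by
    intro a b h; rw [hsteq] at *; unfold cupRel at *; omega
  have hup : ∀ d : ℕ, ∀ a b : Fin n, i ≤ a.val → a.val + d = b.val → b.val ≤ i + 2*m →
      dreach (cupC n (i+1) m) (cupC n i m) a b := by
    intro d
    induction d with
    | zero =>
      intro a b _ h2 _
      have : a = b := Fin.ext (by omega)
      rw [this]
      exact Relation.ReflTransGen.refl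
    | succ d ih =>
      intro a b h1 h2 h3
      have hlt : a.val + 1 < n := by omega
      refine Relation.ReflTransGen.head
        (hcons a ⟨a.val+1, hlt⟩ h1 (by show a.val + 1 = a.val + 1; rfl)
          (by show a.val + 1 ≤ i + 2*m; omega)) ?_
      exact ih ⟨a.val+1, hlt⟩ b (by show i ≤ a.val + 1; omega)
        (by show a.val + 1 + d = b.val; omega) h3
  have hsymR : ∀ a b : Fin n, dreach (cupC n (i+1) m) (cupC n i m) a b →
      dreach (cupC n (i+1) m) (cupC n i m) b a := by
    intro a b h
    induction h with
    | refl => exact Relation.ReflTransGen.refl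
    | tail _ hstp ih => exact Relation.ReflTransGen.head (hsym _ _ hstp) ih
  intro a b
  constructor
  · intro h
    induction h using Relation.ReflTransGen.head_induction_on with
    | refl => exact Or.inl rfl
    | head hac _ ih =>
      right
      have r1 := hrange _ _ hac
      rcases ih with rfl | hr
      · exact r1
      · exact ⟨r1.1, r1.2.1, hr.2.2.1, hr.2.2.2⟩
  · rintro (rfl | ⟨h1, h2, h3, h4⟩)
    · exact Relation.ReflTransGen.refl
    · have hp : i < n := by omega
      have ra := hup (a.val - i) ⟨i, hp⟩ a (by show i ≤ i; omega)
        (by show i + (a.val - i) = a.val; omega) h2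
      have rb := hup (b.val - i) ⟨i, hp⟩ b (by show i ≤ i; omega)
        (by show i + (b.val - i) = b.val; omega) h4
      exact (hsymR _ _ ra).trans rb

lemma comp8 (n i m : ℕ) (hn : i + 2*m < n) :
    dcomp (cupC n (i+1) m) (cupC n i m) = hopD n i m := by
  have hreach := chain_reach n i m hn
  funext x y
  rcases x with a | a <;> rcases y with b | b <;> apply propext
  · simp only [dcomp, cupC, hopD]
    constructor
    · rintro (h | ⟨hab, m₁, m₂, h1, hr, h2⟩)
      · exact h
      · rw [hreach] at hr
        simp only [cupRel, ne_eq, Fin.ext_iff] at hab hr h1 h2 ⊢; omega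
    · exact Or.inl
  · simp only [dcomp, cupC, hopD]
    constructor
    · rintro ⟨m₁, m₂, h1, hr, h2⟩
      rw [hreach] at hr
      simp only [Fin.ext_iff] at hr h1 h2 ⊢; omega
    · rintro (⟨ha, hb⟩ | ⟨hab, hv⟩)
      · exact ⟨a, b, ⟨rfl, by omega⟩, (hreach a b).2 (Or.inr (by omega)), rfl, by omega⟩
      · exact ⟨a, b, ⟨rfl, by omega⟩, (hreach a b).2 (Or.inl (Fin.ext hab)), rfl, by omega⟩
  · simp only [dcomp, cupC, hopD]
    constructor
    · rintro ⟨m₁, m₂, h1, hr, h2⟩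
      rw [hreach] at hr
      simp only [Fin.ext_iff] at hr h1 h2 ⊢; omega
    · rintro (⟨hb, ha⟩ | ⟨hab, hv⟩)
      · exact ⟨b, a, ⟨rfl, by omega⟩, (hreach b a).2 (Or.inr (by omega)), rfl, by omega⟩
      · exact ⟨b, a, ⟨rfl, by omega⟩, (hreach b a).2 (Or.inl (Fin.ext hab)), rfl, by omega⟩
  · simp only [dcomp, cupC, hopD]
    constructor
    · rintro (h | ⟨hab, m₁, m₂, h1, hr, h2⟩)
      · exact h
      · rw [hreach] at hr
        simp only [cupRel, ne_eq, Fin.ext_iff] at hab hr h1 h2 ⊢; omega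
    · exact Or.inl


lemma comp9 (n i m : ℕ) : dcomp (cupC n (i+1) m) (pdiag n i) = dD n i m := by
  have hsteq : ∀ a b : Fin n, dstep (cupC n (i+1) m) (pdiag n i) a b ↔
      cupRel (i+1) m a.val b.val := by
    intro a b; simp only [dstep, cupC, pdiag, or_false]
  have hreach : ∀ a b : Fin n, dreach (cupC n (i+1) m) (pdiag n i) a b ↔
      (a = b ∨ dstep (cupC n (i+1) m) (pdiag n i) a b) := by
    apply reach_of_matching
    · intro a b h; rw [hsteq] at *; unfold cupRel at *; omega
    · intro a b c' h1 h2; rw [hsteq] at h1 h2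
      apply Fin.ext; unfold cupRel at h1 h2; omega
  funext x y
  rcases x with a | a <;> rcases y with b | b <;> apply propext
  · simp only [dcomp, cupC, pdiag, dD]
    constructor
    · rintro (h | ⟨hab, m₁, m₂, h1, hr, h2⟩)
      · exact h
      · rw [hreach, hsteq] at hr
        simp only [cupRel, ne_eq, Fin.ext_iff] at hab hr h1 h2 ⊢; omega
    · exact Or.inl
  · simp only [dcomp, cupC, pdiag, dD]
    constructor
    · rintro ⟨m₁, m₂, h1, hr, h2⟩
      rw [hreach, hsteq] at hr
      simp only [cupRel, ne_eq, Fin.ext_iff] at hr h1 h2 ⊢; omega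
    · rintro ⟨hab, hv⟩
      exact ⟨a, b, ⟨rfl, by omega⟩, (hreach a b).2 (Or.inl (Fin.ext hab)),
        Fin.ext rfl, by omega⟩
  · simp only [dcomp, cupC, pdiag, dD]
    constructor
    · rintro ⟨m₁, m₂, h1, hr, h2⟩
      rw [hreach, hsteq] at hr
      simp only [cupRel, ne_eq, Fin.ext_iff] at hr h1 h2 ⊢; omega
    · rintro ⟨hab, hv⟩
      exact ⟨b, a, ⟨rfl, by omega⟩, (hreach b a).2 (Or.inl (Fin.ext hab.symm)),
        Fin.ext rfl, by omega⟩
  · simp only [dcomp, cupC, pdiag, dD, false_or]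
    constructor
    · rintro ⟨hab, m₁, m₂, h1, hr, h2⟩
      rw [hreach, hsteq] at hr
      simp only [cupRel, ne_eq, Fin.ext_iff] at hab hr h1 h2 ⊢; omega
    · intro h
      refine ⟨by simp only [ne_eq, Fin.ext_iff]; unfold cupRel at h; omega,
        a, b, ⟨Fin.ext rfl, by unfold cupRel at h; omega⟩,
        (hreach a b).2 (Or.inr ((hsteq a b).2 h)),
        Fin.ext rfl, by unfold cupRel at h; omega⟩

lemma comp10 (n i m : ℕ) (hn : i + 2*m < n) :
    dcomp (hopD n i m) (shiftD n i (2*m)) = dD n i m := by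
  have hsteq : ∀ a b : Fin n, dstep (hopD n i m) (shiftD n i (2*m)) a b ↔
      cupRel i m a.val b.val := by
    intro a b; simp only [dstep, hopD, shiftD, or_false]
  have hreach : ∀ a b : Fin n, dreach (hopD n i m) (shiftD n i (2*m)) a b ↔
      (a = b ∨ dstep (hopD n i m) (shiftD n i (2*m)) a b) := by
    apply reach_of_matching
    · intro a b h; rw [hsteq] at *; unfold cupRel at *; omega
    · intro a b c' h1 h2; rw [hsteq] at h1 h2
      apply Fin.ext; unfold cupRel at h1 h2; omega
  funext x y
  rcases x with a | a <;> rcases y with b | b <;> apply propext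
  · simp only [dcomp, hopD, shiftD, dD]
    constructor
    · rintro (h | ⟨hab, m₁, m₂, h1, hr, h2⟩)
      · exact h
      · rw [hreach, hsteq] at hr
        simp only [cupRel, ne_eq, Fin.ext_iff] at hab hr h1 h2 ⊢; omega
    · exact Or.inl
  · simp only [dcomp, hopD, shiftD, dD]
    constructor
    · rintro ⟨m₁, m₂, h1, hr, h2⟩
      rw [hreach, hsteq] at hr
      simp only [cupRel, sh, ne_eq, Fin.ext_iff] at hr h1 h2 ⊢; omega
    · rintro ⟨hab, hv⟩
      refine ⟨a, b, Or.inr ⟨rfl, by omega⟩, (hreach a b).2 (Or.inl (Fin.ext hab)), ?_⟩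
      unfold sh; omega
  · simp only [dcomp, hopD, shiftD, dD]
    constructor
    · rintro ⟨m₁, m₂, h1, hr, h2⟩
      rw [hreach, hsteq] at hr
      simp only [cupRel, sh, ne_eq, Fin.ext_iff] at hr h1 h2 ⊢; omega
    · rintro ⟨hab, hv⟩
      refine ⟨b, a, Or.inr ⟨rfl, by omega⟩, (hreach b a).2 (Or.inl (Fin.ext hab.symm)), ?_⟩
      unfold sh; omega
  · simp only [dcomp, hopD, shiftD, dD, false_or]
    constructor
    · rintro ⟨hab, m₁, m₂, h1, hr, h2⟩
      rw [hreach, hsteq] at hr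
      simp only [cupRel, sh, ne_eq, Fin.ext_iff] at hab hr h1 h2 ⊢; omega
    · intro h
      refine ⟨by simp only [ne_eq, Fin.ext_iff]; unfold cupRel at h; omega, ?_⟩
      rcases h with ⟨h1, h2, h3, h4⟩ | ⟨h1, h2, h3, h4⟩
      · have hlt : a.val - 1 < n := by omega
        refine ⟨⟨a.val - 1, hlt⟩, a, ?_, (hreach _ _).2 (Or.inr ((hsteq _ _).2 ?_)), ?_⟩
        · show sh i (2*m) (a.val - 1) a.val; unfold sh; omega
        · show cupRel i m (a.val - 1) a.val; unfold cupRel; omega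
        · show sh i (2*m) a.val b.val; unfold sh; omega
      · have hlt : b.val - 1 < n := by omega
        refine ⟨b, ⟨b.val - 1, hlt⟩, ?_, (hreach _ _).2 (Or.inr ((hsteq _ _).2 ?_)), ?_⟩
        · show sh i (2*m) b.val a.val; unfold sh; omega
        · show cupRel i m b.val (b.val - 1); unfold cupRel; omega
        · show sh i (2*m) (b.val - 1) b.val; unfold sh; omega

end MotzkinHopAux

/-- (Hop lemma) In the Motzkin monoid `M_n`, for `i < k` with `k - i` even:
`(t_{k-1} t_{k-3} ⋯ t_{i+1}) p_i
  = (t_{k-1} t_{k-3} ⋯ t_{i+1})(t_{k-2} t_{k-4} ⋯ t_i)(l_{k-1} l_{k-2} ⋯ l_i)`. -/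
theorem motzkin_hop (n i k : ℕ) (hik : i < k) (heven : Even (k - i)) (hk : k < n) :
    dcomp (dprod n ((List.range ((k - i) / 2)).map (fun j => tdiag n (k - 1 - 2 * j))))
        (pdiag n i) =
      dcomp
        (dcomp (dprod n ((List.range ((k - i) / 2)).map (fun j => tdiag n (k - 1 - 2 * j))))
          (dprod n ((List.range ((k - i) / 2)).map (fun j => tdiag n (k - 2 - 2 * j)))))
        (dprod n ((List.range (k - i)).map (fun j => ldiag n (k - 1 - j)))) := by
  obtain ⟨t, ht⟩ := heven
  set m := (k - i) / 2 with hmdef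
  have hm1 : 1 ≤ m := by omega
  have hkm : k = i + 2*m := by omega
  have e1 : (List.range m).map (fun j => tdiag n (k - 1 - 2 * j)) =
      (List.range m).map (fun j => tdiag n ((i+1) + 2*(m-1-j))) := by
    apply List.map_congr_left
    intro j hj; rw [List.mem_range] at hj
    rw [show k - 1 - 2 * j = i + 1 + 2*(m-1-j) from by omega]
  have e2 : (List.range m).map (fun j => tdiag n (k - 2 - 2 * j)) =
      (List.range m).map (fun j => tdiag n (i + 2*(m-1-j))) := by
    apply List.map_congr_left
    intro j hj; rw [List.mem_range] at hj
    rw [show k - 2 - 2 * j = i + 2*(m-1-j) from by omega]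
  have e3 : (List.range (k - i)).map (fun j => ldiag n (k - 1 - j)) =
      (List.range (2*m)).map (fun j => ldiag n (i + (2*m-1-j))) := by
    rw [show k - i = 2*m from by omega]
    apply List.map_congr_left
    intro j hj; rw [List.mem_range] at hj
    rw [show k - 1 - j = i + (2*m-1-j) from by omega]
  rw [e1, e2, e3, mh_tprod n (i+1) m (by omega), mh_tprod n i m (by omega),
    lprod n i (2*m) (by omega) (by omega), comp8 n i m (by omega), comp9,
    comp10 n i m (by omega)]
end

section
/- (Burrow lemma) In the Motzkin monoid M_n, t_{i−1} p_i = t_{i−1} t_i l_{i−1} l_i for all 2 ≤ i ≤ n−1. -/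
/-! ### Auxiliary material for the Burrow lemma -/

/-- The diagram `t_k p_{k+1}` (and also `t_k t_{k+1} l_k l_{k+1}`), described explicitly. -/
def burrowP (n k : ℕ) : MDiag n := fun x y =>
  match x, y with
  | Sum.inl a, Sum.inl b => ((a:ℕ) = k ∧ (b:ℕ) = k+1) ∨ ((a:ℕ) = k+1 ∧ (b:ℕ) = k)
  | Sum.inl a, Sum.inr b => (a:ℕ) = (b:ℕ) ∧ (a:ℕ) ≠ k ∧ (a:ℕ) ≠ k+1
  | Sum.inr a, Sum.inl b => (a:ℕ) = (b:ℕ) ∧ (b:ℕ) ≠ k ∧ (b:ℕ) ≠ k+1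
  | Sum.inr _, Sum.inr _ => False

/-- The diagram `t_k t_{k+1}`, described explicitly. -/
def burrowX (n k : ℕ) : MDiag n := fun x y =>
  match x, y with
  | Sum.inl a, Sum.inl b => ((a:ℕ) = k ∧ (b:ℕ) = k+1) ∨ ((a:ℕ) = k+1 ∧ (b:ℕ) = k)
  | Sum.inl a, Sum.inr b =>
      ((a:ℕ) = k+2 ∧ (b:ℕ) = k) ∨ ((a:ℕ) = (b:ℕ) ∧ (a:ℕ) ≠ k ∧ (a:ℕ) ≠ k+1 ∧ (a:ℕ) ≠ k+2)
  | Sum.inr b, Sum.inl a =>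
      ((a:ℕ) = k+2 ∧ (b:ℕ) = k) ∨ ((a:ℕ) = (b:ℕ) ∧ (a:ℕ) ≠ k ∧ (a:ℕ) ≠ k+1 ∧ (a:ℕ) ≠ k+2)
  | Sum.inr a, Sum.inr b => ((a:ℕ) = k+1 ∧ (b:ℕ) = k+2) ∨ ((a:ℕ) = k+2 ∧ (b:ℕ) = k+1)

/-- The diagram `t_k t_{k+1} l_k`, described explicitly. -/
def burrowY (n k : ℕ) : MDiag n := fun x y =>
  match x, y with
  | Sum.inl a, Sum.inl b => ((a:ℕ) = k ∧ (b:ℕ) = k+1) ∨ ((a:ℕ) = k+1 ∧ (b:ℕ) = k)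
  | Sum.inl a, Sum.inr b =>
      ((a:ℕ) = k+2 ∧ (b:ℕ) = k+1) ∨ ((a:ℕ) = (b:ℕ) ∧ (a:ℕ) ≠ k ∧ (a:ℕ) ≠ k+1 ∧ (a:ℕ) ≠ k+2)
  | Sum.inr b, Sum.inl a =>
      ((a:ℕ) = k+2 ∧ (b:ℕ) = k+1) ∨ ((a:ℕ) = (b:ℕ) ∧ (a:ℕ) ≠ k ∧ (a:ℕ) ≠ k+1 ∧ (a:ℕ) ≠ k+2)
  | Sum.inr _, Sum.inr _ => False

/-- Any reflexive transitive relation containing the one-step relation bounds `dreach`. -/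
lemma reach_bound {n : ℕ} {d₁ d₂ : MDiag n} (R : ℕ → ℕ → Prop)
    (hrefl : ∀ m : ℕ, R m m) (htrans : ∀ a b c : ℕ, R a b → R b c → R a c)
    (hstep : ∀ m m' : Fin n, dstep d₁ d₂ m m' → R (m:ℕ) (m':ℕ)) :
    ∀ m m' : Fin n, dreach d₁ d₂ m m' → R (m:ℕ) (m':ℕ) := by
  intro m m' h
  induction h with
  | refl => exact hrefl _
  | tail _ s ih => exact htrans _ _ _ ih (hstep _ _ s)

/-- `t_k p_{k+1} = burrowP`. -/
lemma burrow_lhs (n k : ℕ) : dcomp (tdiag n k) (pdiag n (k+1)) = burrowP n k := by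
  have hr : ∀ m m' : Fin n, dreach (tdiag n k) (pdiag n (k+1)) m m' →
      ((m:ℕ) = (m':ℕ) ∨ (((m:ℕ) = k ∨ (m:ℕ) = k+1) ∧ ((m':ℕ) = k ∨ (m':ℕ) = k+1))) := by
    refine reach_bound
      (fun m m' => (m = m' ∨ ((m = k ∨ m = k+1) ∧ (m' = k ∨ m' = k+1))))
      (fun m => Or.inl rfl) (fun a b c h1 h2 => by omega) ?_
    intro m m' s
    rcases s with s | s
    · simp only [tdiag] at s; omega
    · simp only [pdiag] at s
  funext x y
  rcases x with a | a <;> rcases y with b | b <;> apply propext <;>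
    simp only [dcomp, tdiag, pdiag, burrowP, ne_eq, Fin.ext_iff]
  · constructor
    · rintro (h | ⟨hab, m, m', ⟨h1, h2, h3⟩, hre, h4, h5, h6⟩)
      · exact h
      · have := hr _ _ hre; omega
    · exact Or.inl
  · constructor
    · rintro ⟨m, m', ⟨h1, h2, h3⟩, hre, h4, h5⟩
      have := hr _ _ hre; omega
    · rintro ⟨h1, h2, h3⟩
      exact ⟨a, a, ⟨rfl, h2, h3⟩, Relation.ReflTransGen.refl, h1, by omega⟩
  · constructor
    · rintro ⟨m, m', ⟨h1, h2, h3⟩, hre, h4, h5⟩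
      have := hr _ _ hre; omega
    · rintro ⟨h1, h2, h3⟩
      exact ⟨b, b, ⟨rfl, by omega, by omega⟩, Relation.ReflTransGen.refl, by omega, by omega⟩
  · constructor
    · rintro (h | ⟨hab, m, m', ⟨h1, h2⟩, hre, h3, h4⟩)
      · exact h
      · have := hr _ _ hre; omega
    · exact False.elim

/-- `t_k t_{k+1} = burrowX`. -/
lemma burrow_x (n k : ℕ) : dcomp (tdiag n k) (tdiag n (k+1)) = burrowX n k := by
  have hr : ∀ m m' : Fin n, dreach (tdiag n k) (tdiag n (k+1)) m m' →
      ((m:ℕ) = (m':ℕ) ∨ (((m:ℕ) = k ∨ (m:ℕ) = k+1 ∨ (m:ℕ) = k+2) ∧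
        ((m':ℕ) = k ∨ (m':ℕ) = k+1 ∨ (m':ℕ) = k+2))) := by
    refine reach_bound
      (fun m m' => (m = m' ∨ ((m = k ∨ m = k+1 ∨ m = k+2) ∧ (m' = k ∨ m' = k+1 ∨ m' = k+2))))
      (fun m => Or.inl rfl) (fun a b c h1 h2 => by omega) ?_
    intro m m' s
    rcases s with s | s <;> simp only [tdiag] at s <;> omega
  funext x y
  rcases x with a | a <;> rcases y with b | b <;> apply propext <;>
    simp only [dcomp, tdiag, burrowX, ne_eq, Fin.ext_iff]
  · constructor
    · rintro (h | ⟨hab, m, m', ⟨h1, h2, h3⟩, hre, h4, h5, h6⟩)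
      · exact h
      · have := hr _ _ hre; omega
    · exact Or.inl
  · constructor
    · rintro ⟨m, m', ⟨h1, h2, h3⟩, hre, h4, h5, h6⟩
      have := hr _ _ hre; omega
    · rintro (⟨h1, h2⟩ | ⟨h1, h2, h3, h4⟩)
      · have hlt : k + 1 < n := by have := a.isLt; omega
        refine ⟨a, b, ⟨rfl, by omega, by omega⟩, ?_, rfl, by omega, by omega⟩
        refine Relation.ReflTransGen.head (b := ⟨k+1, hlt⟩) (Or.inr ?_) (Relation.ReflTransGen.single (Or.inl ?_))
        · exact Or.inr ⟨h1, rfl⟩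
        · exact Or.inr ⟨rfl, h2⟩
      · exact ⟨a, a, ⟨rfl, h2, h3⟩, Relation.ReflTransGen.refl, h1, by omega, by omega⟩
  · constructor
    · rintro ⟨m, m', ⟨h1, h2, h3⟩, hre, h4, h5, h6⟩
      have := hr _ _ hre; omega
    · rintro (⟨h1, h2⟩ | ⟨h1, h2, h3, h4⟩)
      · have hlt : k + 1 < n := by have := b.isLt; omega
        refine ⟨b, a, ⟨rfl, by omega, by omega⟩, ?_, rfl, by omega, by omega⟩
        refine Relation.ReflTransGen.head (b := ⟨k+1, hlt⟩) (Or.inr ?_) (Relation.ReflTransGen.single (Or.inl ?_))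
        · exact Or.inr ⟨h1, rfl⟩
        · exact Or.inr ⟨rfl, h2⟩
      · exact ⟨b, b, ⟨rfl, by omega, by omega⟩, Relation.ReflTransGen.refl, by omega, by omega, by omega⟩
  · constructor
    · rintro (h | ⟨hab, m, m', ⟨h1, h2, h3⟩, hre, h4, h5, h6⟩)
      · exact h
      · have := hr _ _ hre; omega
    · exact Or.inl

/-- `(t_k t_{k+1}) l_k = burrowY`. -/
lemma burrow_y (n k : ℕ) : dcomp (burrowX n k) (ldiag n k) = burrowY n k := by
  have hr : ∀ m m' : Fin n, dreach (burrowX n k) (ldiag n k) m m' →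
      ((m:ℕ) = (m':ℕ) ∨ (((m:ℕ) = k+1 ∨ (m:ℕ) = k+2) ∧ ((m':ℕ) = k+1 ∨ (m':ℕ) = k+2))) := by
    refine reach_bound
      (fun m m' => (m = m' ∨ ((m = k+1 ∨ m = k+2) ∧ (m' = k+1 ∨ m' = k+2))))
      (fun m => Or.inl rfl) (fun a b c h1 h2 => by omega) ?_
    intro m m' s
    rcases s with s | s
    · simp only [burrowX] at s; omega
    · simp only [ldiag] at s
  funext x y
  rcases x with a | a <;> rcases y with b | b <;> apply propext <;>
    simp only [dcomp, burrowX, burrowY, ldiag, ne_eq, Fin.ext_iff]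
  · constructor
    · rintro (h | ⟨hab, m, m', (⟨h1, h2⟩ | ⟨h1, h2, h3, h4⟩), hre,
        (⟨h5, h6⟩ | ⟨h5, h6, h7, h8⟩)⟩)
      · exact h
      all_goals (have := hr _ _ hre; omega)
    · exact Or.inl
  · constructor
    · rintro ⟨m, m', (⟨h1, h2⟩ | ⟨h1, h2, h3, h4⟩), hre, (⟨h5, h6⟩ | ⟨h5, h6, h7⟩)⟩ <;>
        (have := hr _ _ hre; omega)
    · rintro (⟨h1, h2⟩ | ⟨h1, h2, h3, h4⟩)
      · have hlt : k < n := by have := a.isLt; omega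
        refine ⟨⟨k, hlt⟩, ⟨k, hlt⟩, Or.inl ⟨h1, rfl⟩, Relation.ReflTransGen.refl,
          Or.inl ⟨rfl, h2⟩⟩
      · exact ⟨a, a, Or.inr ⟨rfl, h2, h3, h4⟩, Relation.ReflTransGen.refl,
          Or.inr ⟨h1, h2, h3⟩⟩
  · constructor
    · rintro ⟨m, m', (⟨h1, h2⟩ | ⟨h1, h2, h3, h4⟩), hre, (⟨h5, h6⟩ | ⟨h5, h6, h7⟩)⟩ <;>
        (have := hr _ _ hre; omega)
    · rintro (⟨h1, h2⟩ | ⟨h1, h2, h3, h4⟩)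
      · have hlt : k < n := by have := b.isLt; omega
        refine ⟨⟨k, hlt⟩, ⟨k, hlt⟩, Or.inl ⟨h1, rfl⟩, Relation.ReflTransGen.refl,
          Or.inl ⟨rfl, h2⟩⟩
      · exact ⟨b, b, Or.inr ⟨by omega, h2, h3, h4⟩, Relation.ReflTransGen.refl,
          Or.inr ⟨by omega, h2, h3⟩⟩
  · constructor
    · rintro (h | ⟨hab, m, m', (⟨h1, h2⟩ | ⟨h1, h2, h3⟩), hre, (⟨h4, h5⟩ | ⟨h4, h5, h6⟩)⟩)
      · exact h
      all_goals (have := hr _ _ hre; omega)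
    · exact False.elim

/-- `(t_k t_{k+1} l_k) l_{k+1} = burrowP`. -/
lemma burrow_z (n k : ℕ) : dcomp (burrowY n k) (ldiag n (k+1)) = burrowP n k := by
  have hr : ∀ m m' : Fin n, dreach (burrowY n k) (ldiag n (k+1)) m m' →
      (m:ℕ) = (m':ℕ) := by
    refine reach_bound (fun m m' => m = m') (fun m => rfl)
      (fun a b c h1 h2 => by omega) ?_
    intro m m' s
    rcases s with s | s
    · simp only [burrowY] at s
    · simp only [ldiag] at s
  funext x y
  rcases x with a | a <;> rcases y with b | b <;> apply propext <;>
    simp only [dcomp, burrowY, burrowP, ldiag, ne_eq, Fin.ext_iff]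
  · constructor
    · rintro (h | ⟨hab, m, m', (⟨h1, h2⟩ | ⟨h1, h2, h3, h4⟩), hre,
        (⟨h5, h6⟩ | ⟨h5, h6, h7, h8⟩)⟩)
      · exact h
      all_goals (have := hr _ _ hre; omega)
    · exact Or.inl
  · constructor
    · rintro ⟨m, m', (⟨h1, h2⟩ | ⟨h1, h2, h3, h4⟩), hre, (⟨h5, h6⟩ | ⟨h5, h6, h7⟩)⟩ <;>
        (have := hr _ _ hre; omega)
    · rintro ⟨h1, h2, h3⟩
      by_cases hc : (a:ℕ) = k + 2
      · have hlt : k + 1 < n := by have := a.isLt; omega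
        exact ⟨⟨k+1, hlt⟩, ⟨k+1, hlt⟩, Or.inl ⟨hc, rfl⟩, Relation.ReflTransGen.refl,
          Or.inl ⟨rfl, by omega⟩⟩
      · exact ⟨a, a, Or.inr ⟨rfl, h2, h3, hc⟩, Relation.ReflTransGen.refl,
          Or.inr ⟨h1, by omega, by omega⟩⟩
  · constructor
    · rintro ⟨m, m', (⟨h1, h2⟩ | ⟨h1, h2, h3, h4⟩), hre, (⟨h5, h6⟩ | ⟨h5, h6, h7⟩)⟩ <;>
        (have := hr _ _ hre; omega)
    · rintro ⟨h1, h2, h3⟩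
      by_cases hc : (b:ℕ) = k + 2
      · have hlt : k + 1 < n := by have := b.isLt; omega
        exact ⟨⟨k+1, hlt⟩, ⟨k+1, hlt⟩, Or.inl ⟨hc, rfl⟩, Relation.ReflTransGen.refl,
          Or.inl ⟨rfl, by omega⟩⟩
      · exact ⟨b, b, Or.inr ⟨rfl, h2, h3, hc⟩, Relation.ReflTransGen.refl,
          Or.inr ⟨by omega, by omega, by omega⟩⟩
  · constructor
    · rintro (h | ⟨hab, m, m', (⟨h1, h2⟩ | ⟨h1, h2, h3⟩), hre, (⟨h4, h5⟩ | ⟨h4, h5, h6⟩)⟩)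
      · exact h
      all_goals (have := hr _ _ hre; omega)
    · exact False.elim

/-- (Burrow lemma) In the Motzkin monoid `M_n`,
`t_{i-1} p_i = t_{i-1} t_i l_{i-1} l_i` for all valid `i` (0-indexed). -/
theorem motzkin_burrow (n : ℕ) :
    ∀ i : ℕ, 1 ≤ i → i + 1 < n →
      dcomp (tdiag n (i - 1)) (pdiag n i) =
        dcomp (dcomp (dcomp (tdiag n (i - 1)) (tdiag n i)) (ldiag n (i - 1))) (ldiag n i) := by
  rintro i hi hn
  obtain ⟨k, rfl⟩ : ∃ k, i = k + 1 := ⟨i - 1, by omega⟩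
  have h1 : k + 1 - 1 = k := by omega
  rw [h1, burrow_lhs, burrow_x, burrow_y, show k + 1 = k + 1 from rfl]
  have h2 : k + 1 + 1 = k + 2 := rfl
  rw [burrow_z]
end
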